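/- arXiv:1908.00261 — 5 statements merged into one kernel-verified Lean document; each statement's English description precedes it below -/
import Mathlib

section
/- (Non-concavity of policy optimization) There exists a finite discounted MDP, a state s, and a discount factor γ ∈ [0,1) such that: (i) the function θ ↦ V^{π_θ}(s) on ℝ^{S×A}, where π_θ is the softmax parameterization, is not concave; and (ii) the function π ↦ V^π(s) on the product of probability simplices Δ(A)^S (direct parameterization) is not concave. In particular, non-concavity in case (i) is witnessed by parameters θ⁽¹⁾, θ⁽²⁾ with V^{π_{θ⁽¹⁾}}(s) + V^{π_{θ⁽²⁾}}(s) > 2 V^{π_{(θ⁽¹⁾+θ⁽²⁾)/2}}(s). -/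
open scoped BigOperators InnerProductSpace

/-- A finite Markov decision process (the data only: transition probabilities `P`,
rewards `r`, and discount factor `γ`). -/
structure FinMDP where
  S : Type
  A : Type
  [fS : Fintype S]
  [dS : DecidableEq S]
  [fA : Fintype A]
  [dA : DecidableEq A]
  P : S → A → S → ℝ
  r : S → A → ℝ
  γ : ℝ

attribute [instance] FinMDP.fS FinMDP.dS FinMDP.fA FinMDP.dA

/-- `μ` is a probability distribution on the finite type `X`. -/
def IsDist {X : Type*} [Fintype X] (μ : X → ℝ) : Prop :=
  (∀ x, 0 ≤ μ x) ∧ ∑ x, μ x = 1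

namespace FinMDP

variable (M : FinMDP)

/-- The MDP data is well formed: `P` is a transition kernel, rewards lie in `[0,1]`,
and `γ ∈ [0,1)`. -/
def Valid : Prop :=
  (∀ s a s', 0 ≤ M.P s a s') ∧ (∀ s a, ∑ s', M.P s a s' = 1) ∧
    (∀ s a, 0 ≤ M.r s a ∧ M.r s a ≤ 1) ∧ 0 ≤ M.γ ∧ M.γ < 1

/-- `π` is a stochastic policy: `π s a` is the probability `π(a|s)`. -/
def IsPolicy (π : M.S → M.A → ℝ) : Prop :=
  (∀ s a, 0 ≤ π s a) ∧ ∀ s, ∑ a, π s a = 1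

/-- State-to-state transition matrix induced by a policy. -/
noncomputable def Pmat (π : M.S → M.A → ℝ) : Matrix M.S M.S ℝ :=
  Matrix.of fun s s' => ∑ a, π s a * M.P s a s'

/-- Expected one-step reward under a policy. -/
noncomputable def rPol (π : M.S → M.A → ℝ) (s : M.S) : ℝ :=
  ∑ a, π s a * M.r s a

/-- The value function `V^π(s₀) = E[∑ₜ γ^t r(s_t, a_t)]`. -/
noncomputable def V (π : M.S → M.A → ℝ) (s₀ : M.S) : ℝ :=
  ∑' t : ℕ, M.γ ^ t * ((M.Pmat π ^ t).mulVec (M.rPol π)) s₀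

/-- `V^π(ρ)` for a starting state distribution `ρ`. -/
noncomputable def Vd (π : M.S → M.A → ℝ) (ρ : M.S → ℝ) : ℝ :=
  ∑ s, ρ s * M.V π s

/-- The action-value function `Q^π(s,a)`. -/
noncomputable def Qf (π : M.S → M.A → ℝ) (s : M.S) (a : M.A) : ℝ :=
  M.r s a + M.γ * ∑ s', M.P s a s' * M.V π s'

/-- The advantage function `A^π(s,a) = Q^π(s,a) - V^π(s)`. -/
noncomputable def Adv (π : M.S → M.A → ℝ) (s : M.S) (a : M.A) : ℝ :=
  M.Qf π s a - M.V π s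

/-- Discounted state visitation distribution `d^π_{s₀}(s)`. -/
noncomputable def dvisit (π : M.S → M.A → ℝ) (s₀ s : M.S) : ℝ :=
  (1 - M.γ) * ∑' t : ℕ, M.γ ^ t * (M.Pmat π ^ t) s₀ s

/-- Discounted state visitation distribution `d^π_μ(s)` for a starting distribution `μ`. -/
noncomputable def dvisitD (π : M.S → M.A → ℝ) (μ : M.S → ℝ) (s : M.S) : ℝ :=
  ∑ s₀, μ s₀ * M.dvisit π s₀ s

/-- State-action transition matrix induced by a policy. -/
noncomputable def PmatSA (π : M.S → M.A → ℝ) :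
    Matrix (M.S × M.A) (M.S × M.A) ℝ :=
  Matrix.of fun p q => M.P p.1 p.2 q.1 * π q.1 q.2

/-- Discounted state-action visitation measure `d^π_ν(s,a)` started from `(s₀,a₀) ∼ ν`,
executing `a₀` first and following `π` thereafter. -/
noncomputable def dvisitSA (π : M.S → M.A → ℝ) (ν : M.S × M.A → ℝ)
    (p : M.S × M.A) : ℝ :=
  (1 - M.γ) * ∑' t : ℕ, M.γ ^ t * ∑ p₀, ν p₀ * (M.PmatSA π ^ t) p₀ p

/-- The softmax policy `π_θ(a|s) = exp(θ_{s,a}) / ∑_{a'} exp(θ_{s,a'})`. -/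
noncomputable def softmaxPolicy (θ : EuclideanSpace ℝ (M.S × M.A)) :
    M.S → M.A → ℝ :=
  fun s a => Real.exp (θ (s, a)) / ∑ a', Real.exp (θ (s, a'))

end FinMDP

@[reducible] noncomputable def M0 : FinMDP where
  S := Fin 3
  A := Fin 2
  P := fun s a s' => if s = 0 ∧ a = 0 then (if s' = 1 then 1 else 0)
       else if s' = 2 then 1 else 0
  r := fun s a => if s = 1 ∧ a = 0 then 1 else 0
  γ := 1/2

section Aux

lemma hrPol (π : Fin 3 → Fin 2 → ℝ) (s : Fin 3) :
    M0.rPol π s = if s = (1 : Fin 3) then π 1 0 else 0 := by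
  fin_cases s <;> simp [FinMDP.rPol, M0, Fin.sum_univ_two]

lemma hPcol0 (π : Fin 3 → Fin 2 → ℝ) (s : Fin 3) : M0.Pmat π s (0 : Fin 3) = 0 := by
  fin_cases s <;> simp [FinMDP.Pmat, M0, Fin.sum_univ_two]

lemma hPcol1 (π : Fin 3 → Fin 2 → ℝ) (s : Fin 3) :
    M0.Pmat π s (1 : Fin 3) = if s = 0 then π 0 0 else 0 := by
  fin_cases s <;> simp [FinMDP.Pmat, M0, Fin.sum_univ_two]

lemma hpow00 (π : Fin 3 → Fin 2 → ℝ) (k : ℕ) (hk : 1 ≤ k) :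
    (M0.Pmat π ^ k) (0 : Fin 3) (0 : Fin 3) = 0 := by
  obtain ⟨m, rfl⟩ := Nat.exists_eq_add_of_le hk
  rw [add_comm, pow_add, pow_one, Matrix.mul_apply]
  apply Finset.sum_eq_zero
  intro s _
  rw [hPcol0 π s]; ring

lemma hpow01 (π : Fin 3 → Fin 2 → ℝ) (t : ℕ) (ht : 2 ≤ t) :
    (M0.Pmat π ^ t) (0 : Fin 3) (1 : Fin 3) = 0 := by
  obtain ⟨m, rfl⟩ := Nat.exists_eq_add_of_le ht
  rw [show 2 + m = (1 + m) + 1 by ring, pow_succ, Matrix.mul_apply]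
  apply Finset.sum_eq_zero
  intro s _
  rw [hPcol1 π s]
  by_cases h : s = (0 : Fin 3)
  · subst h; rw [hpow00 π _ (by omega)]; simp
  · simp [h]

lemma keyV (π : Fin 3 → Fin 2 → ℝ) : M0.V π (0 : Fin 3) = (1/2) * (π 0 0 * π 1 0) := by
  have hterm : ∀ t : ℕ, M0.γ ^ t * ((M0.Pmat π ^ t).mulVec (M0.rPol π)) (0 : Fin 3)
      = if t = 1 then (1/2) * (π 0 0 * π 1 0) else 0 := by
    intro t
    have hmv : ((M0.Pmat π ^ t).mulVec (M0.rPol π)) (0 : Fin 3)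
        = (M0.Pmat π ^ t) (0 : Fin 3) (1 : Fin 3) * π 1 0 := by
      show ∑ s : Fin 3, (M0.Pmat π ^ t) (0 : Fin 3) s * M0.rPol π s = _
      rw [Fin.sum_univ_three]
      simp [hrPol]
    match t with
    | 0 => rw [hmv]; simp [Matrix.one_apply]
    | 1 =>
      rw [hmv, pow_one (M0.Pmat π), hPcol1 π 0]
      have hγ : M0.γ = 1/2 := rfl
      rw [hγ]; norm_num
    | (n+2) => rw [hmv, hpow01 π _ (by omega)]; simp
  rw [FinMDP.V]
  rw [tsum_eq_sum (s := {1}) (by intro t ht; rw [hterm]; simp at ht; simp [ht])]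
  rw [Finset.sum_singleton, hterm]; simp

lemma M0valid : M0.Valid := by
  refine ⟨?_, ?_, ?_, by norm_num [M0], by norm_num [M0]⟩
  · intro s a s'
    simp only [M0]
    split <;> split <;> norm_num
  · intro s a
    fin_cases s <;> fin_cases a <;> simp [M0, Fin.sum_univ_three]
  · intro s a
    simp only [M0]
    split <;> norm_num

lemma softmax_apply (θ : EuclideanSpace ℝ (M0.S × M0.A)) (s : Fin 3) (a : Fin 2) :
    M0.softmaxPolicy θ s a
      = Real.exp (θ (s, a)) / (Real.exp (θ (s, (0:Fin 2))) + Real.exp (θ (s, (1:Fin 2)))) := by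
  rw [FinMDP.softmaxPolicy]
  congr 1
  exact Fin.sum_univ_two _

end Aux

noncomputable def th1 : EuclideanSpace ℝ (M0.S × M0.A) :=
  WithLp.toLp 2 (fun p => if p.2 = (0 : Fin 2) then (1:ℝ) else 0)

lemma th1_apply (s : Fin 3) (a : Fin 2) :
    th1 (s, a) = if a = (0 : Fin 2) then (1:ℝ) else 0 := rfl

lemma Vsm1 : M0.V (M0.softmaxPolicy th1) (0 : Fin 3)
    = (1/2) * ((Real.exp 1 / (Real.exp 1 + 1)) * (Real.exp 1 / (Real.exp 1 + 1))) := by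
  rw [keyV (M0.softmaxPolicy th1)]
  rw [softmax_apply th1 0 0, softmax_apply th1 1 0]
  simp [th1, th1_apply]

lemma Vsm2 : M0.V (M0.softmaxPolicy (-th1)) (0 : Fin 3)
    = (1/2) * (((Real.exp 1)⁻¹ / ((Real.exp 1)⁻¹ + 1)) * ((Real.exp 1)⁻¹ / ((Real.exp 1)⁻¹ + 1))) := by
  rw [keyV (M0.softmaxPolicy (-th1))]
  rw [softmax_apply (-th1) 0 0, softmax_apply (-th1) 1 0]
  have h1 : (-th1) ((0:Fin 3), (0:Fin 2)) = -1 := rfl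
  have h2 : (-th1) ((0:Fin 3), (1:Fin 2)) = 0 := by
    show -th1 ((0:Fin 3), (1:Fin 2)) = 0
    rw [th1_apply]; norm_num
  have h3 : (-th1) ((1:Fin 3), (0:Fin 2)) = -1 := rfl
  have h4 : (-th1) ((1:Fin 3), (1:Fin 2)) = 0 := by
    show -th1 ((1:Fin 3), (1:Fin 2)) = 0
    rw [th1_apply]; norm_num
  rw [h1, h2, h3, h4, Real.exp_neg, Real.exp_zero]

lemma Vsm0 : M0.V (M0.softmaxPolicy (0 : EuclideanSpace ℝ (M0.S × M0.A))) (0 : Fin 3) = 1/8 := by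
  rw [keyV (M0.softmaxPolicy 0)]
  rw [softmax_apply 0 0 0, softmax_apply 0 1 0]
  norm_num

lemma strictIneq :
    M0.V (M0.softmaxPolicy th1) (0 : Fin 3) + M0.V (M0.softmaxPolicy (-th1)) (0 : Fin 3)
      > 2 * M0.V (M0.softmaxPolicy (0 : EuclideanSpace ℝ (M0.S × M0.A))) (0 : Fin 3) := by
  rw [Vsm1, Vsm2, Vsm0]
  set E := Real.exp 1 with hE
  have h1 : (1:ℝ) < E := by
    have := Real.exp_one_gt_d9; simp only [← hE] at this; linarith
  have h0 : (0:ℝ) < E := by linarith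
  have hne : E + 1 ≠ 0 := by positivity
  have hne2 : E⁻¹ + 1 ≠ 0 := by positivity
  have hne3 : E ≠ 0 := ne_of_gt h0
  rw [gt_iff_lt, ← sub_pos]
  field_simp
  nlinarith [mul_pos (mul_pos (show (0:ℝ) < E + 1 by linarith) (show (0:ℝ) < E + 1 by linarith))
    (mul_pos (show (0:ℝ) < E - 1 by linarith) (show (0:ℝ) < E - 1 by linarith))]

lemma midzero : ((2 : ℝ)⁻¹ • (th1 + (-th1)) : EuclideanSpace ℝ (M0.S × M0.A)) = 0 := by
  simp


/-- **Non-concavity of policy optimization.** There is a finite discounted MDP and a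
state `s` such that `θ ↦ V^{π_θ}(s)` (softmax parameterization) is not concave, the map
`π ↦ V^π(s)` on the product of simplices (direct parameterization) is not concave, and
non-concavity of the former is witnessed by parameters `θ₁, θ₂` with
`V^{π_{θ₁}}(s) + V^{π_{θ₂}}(s) > 2 V^{π_{(θ₁+θ₂)/2}}(s)`. -/
theorem policy_value_nonconcave :
    ∃ (M : FinMDP), M.Valid ∧ ∃ s : M.S,
      (¬ ConcaveOn ℝ Set.univ
          (fun θ : EuclideanSpace ℝ (M.S × M.A) => M.V (M.softmaxPolicy θ) s)) ∧
      (¬ ConcaveOn ℝ {π : M.S → M.A → ℝ | M.IsPolicy π}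
          (fun π : M.S → M.A → ℝ => M.V π s)) ∧
      ∃ θ₁ θ₂ : EuclideanSpace ℝ (M.S × M.A),
        M.V (M.softmaxPolicy θ₁) s + M.V (M.softmaxPolicy θ₂) s >
          2 * M.V (M.softmaxPolicy ((2 : ℝ)⁻¹ • (θ₁ + θ₂))) s := by
  refine ⟨M0, M0valid, (0 : Fin 3), ?_, ?_, th1, -th1, ?_⟩
  · intro h
    have := h.2 (Set.mem_univ th1) (Set.mem_univ (-th1))
      (by norm_num : (0:ℝ) ≤ 1/2) (by norm_num : (0:ℝ) ≤ 1/2) (by norm_num)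
    have hmid : ((1/2 : ℝ) • th1 + (1/2 : ℝ) • (-th1) : EuclideanSpace ℝ (M0.S × M0.A)) = 0 := by
      simp
    rw [hmid] at this
    simp only [smul_eq_mul] at this
    have h2 := strictIneq
    linarith
  · intro h
    set π₁ : Fin 3 → Fin 2 → ℝ := fun _ a => if a = (0:Fin 2) then 1 else 0 with hπ₁
    set π₂ : Fin 3 → Fin 2 → ℝ := fun _ a => if a = (1:Fin 2) then 1 else 0 with hπ₂
    have m1 : π₁ ∈ {π : M0.S → M0.A → ℝ | M0.IsPolicy π} := by
      constructor
      · intro s a; rw [hπ₁]; dsimp only; split <;> norm_num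
      · intro s; show ∑ a : Fin 2, π₁ s a = 1; rw [Fin.sum_univ_two, hπ₁]; norm_num
    have m2 : π₂ ∈ {π : M0.S → M0.A → ℝ | M0.IsPolicy π} := by
      constructor
      · intro s a; rw [hπ₂]; dsimp only; split <;> norm_num
      · intro s; show ∑ a : Fin 2, π₂ s a = 1; rw [Fin.sum_univ_two, hπ₂]; norm_num
    have := h.2 m1 m2
      (by norm_num : (0:ℝ) ≤ 1/2) (by norm_num : (0:ℝ) ≤ 1/2) (by norm_num)
    have e1 : M0.V π₁ (0 : Fin 3) = 1/2 := by rw [keyV π₁, hπ₁]; norm_num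
    have e2 : M0.V π₂ (0 : Fin 3) = 0 := by rw [keyV π₂, hπ₂]; norm_num
    have e3 : M0.V ((1/2 : ℝ) • π₁ + (1/2 : ℝ) • π₂) (0 : Fin 3) = 1/8 := by
      rw [keyV ((1/2 : ℝ) • π₁ + (1/2 : ℝ) • π₂)]
      simp only [Pi.add_apply, Pi.smul_apply, smul_eq_mul, hπ₁, hπ₂]
      norm_num
    simp only at this
    rw [e3] at this
    simp only [smul_eq_mul, e1, e2] at this
    norm_num at this
  · rw [midzero]
    exact strictIneq
end

section
/- (Gradient domination for the direct parameterization) For every finite discounted MDP, every policy π ∈ Δ(A)^S, and all state distributions μ, ρ on S with μ(s) > 0 for all s: V^⋆(ρ) − V^π(ρ) ≤ ‖d^{π⋆}_ρ / d^π_μ‖_∞ · G(π,μ) ≤ (1/(1−γ)) · ‖d^{π⋆}_ρ / μ‖_∞ · G(π,μ), where G(π,μ) := max_{π̄ ∈ Δ(A)^S} Σ_{s,a} (π̄(a|s) − π(a|s)) · (1/(1−γ)) d^π_μ(s) Q^π(s,a), and the ratios ‖·/·‖_∞ are componentwise maxima over states. -/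
open scoped BigOperators InnerProductSpace

open Finset

section Aux
variable {S : Type} [Fintype S] [DecidableEq S]

/-- Entries of powers of a nonneg matrix are nonneg. -/
lemma pow_entry_nonneg {P : Matrix S S ℝ} (hP0 : ∀ s s', 0 ≤ P s s') :
    ∀ (t : ℕ) (s s' : S), 0 ≤ (P ^ t) s s' := by
  intro t
  induction t with
  | zero => intro s s'; simp [Matrix.one_apply]; positivity
  | succ n ih =>
      intro s s'
      rw [pow_succ, Matrix.mul_apply]
      exact Finset.sum_nonneg fun k _ => mul_nonneg (ih s k) (hP0 k s')

lemma pow_row_sum {P : Matrix S S ℝ} (hP1 : ∀ s, ∑ s', P s s' = 1) :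
    ∀ (t : ℕ) (s : S), ∑ s', (P ^ t) s s' = 1 := by
  intro t
  induction t with
  | zero => intro s; simp [Matrix.one_apply]
  | succ n ih =>
      intro s
      simp only [pow_succ, Matrix.mul_apply]
      rw [Finset.sum_comm]
      calc ∑ k, ∑ s', (P ^ n) s k * P k s' = ∑ k, (P ^ n) s k * ∑ s', P k s' := by
            simp [Finset.mul_sum]
        _ = 1 := by simp [hP1, ih s]

lemma pow_mulVec_abs_le {P : Matrix S S ℝ} (hP0 : ∀ s s', 0 ≤ P s s')
    (hP1 : ∀ s, ∑ s', P s s' = 1) {g : S → ℝ} {C : ℝ} (hC : 0 ≤ C)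
    (hg : ∀ s, |g s| ≤ C) (t : ℕ) (s : S) : |((P ^ t).mulVec g) s| ≤ C := by
  have h1 : |((P ^ t).mulVec g) s| ≤ ∑ s', (P ^ t) s s' * |g s'| := by
    refine (Finset.abs_sum_le_sum_abs _ _).trans ?_
    apply Finset.sum_le_sum
    intro s' _
    rw [abs_mul, abs_of_nonneg (pow_entry_nonneg hP0 t s s')]
  refine h1.trans ?_
  calc ∑ s', (P ^ t) s s' * |g s'| ≤ ∑ s', (P ^ t) s s' * C :=
        Finset.sum_le_sum fun s' _ =>
          mul_le_mul_of_nonneg_left (hg s') (pow_entry_nonneg hP0 t s s')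
    _ = C := by rw [← Finset.sum_mul, pow_row_sum hP1 t s, one_mul]

variable (P : Matrix S S ℝ) (γ : ℝ)

/-- `Wv P γ g s = ∑' t, γ^t ((P^t) g)(s)`. -/
noncomputable def Wv (g : S → ℝ) (s : S) : ℝ := ∑' t : ℕ, γ ^ t * ((P ^ t).mulVec g) s

variable {P γ}
variable (hP0 : ∀ s s', 0 ≤ P s s') (hP1 : ∀ s, ∑ s', P s s' = 1)
  (hγ0 : 0 ≤ γ) (hγ1 : γ < 1)

section
include hP0 hP1 hγ0 hγ1

lemma summable_Wv {g : S → ℝ} {C : ℝ} (hC : 0 ≤ C) (hg : ∀ s, |g s| ≤ C) (s : S) :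
    Summable fun t : ℕ => γ ^ t * ((P ^ t).mulVec g) s := by
  refine Summable.of_norm_bounded
    ((summable_geometric_of_lt_one hγ0 hγ1).mul_left C) ?_
  intro t
  calc ‖γ ^ t * ((P ^ t).mulVec g) s‖ = γ ^ t * |((P ^ t).mulVec g) s| := by
        rw [Real.norm_eq_abs, abs_mul, abs_pow, abs_of_nonneg hγ0]
    _ ≤ γ ^ t * C := mul_le_mul_of_nonneg_left (pow_mulVec_abs_le hP0 hP1 hC hg t s)
        (pow_nonneg hγ0 t)
    _ = C * γ ^ t := mul_comm _ _

lemma Wv_abs_le {g : S → ℝ} {C : ℝ} (hC : 0 ≤ C) (hg : ∀ s, |g s| ≤ C) (s : S) :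
    |Wv P γ g s| ≤ C * (1 - γ)⁻¹ := by
  have h := norm_tsum_le_tsum_norm (f := fun t : ℕ => γ ^ t * ((P ^ t).mulVec g) s)
    ((summable_Wv hP0 hP1 hγ0 hγ1 hC hg s).norm)
  rw [Real.norm_eq_abs] at h
  refine h.trans ?_
  have h2 : ∑' t : ℕ, ‖γ ^ t * ((P ^ t).mulVec g) s‖ ≤ ∑' t : ℕ, C * γ ^ t := by
    refine Summable.tsum_le_tsum ?_ (summable_Wv hP0 hP1 hγ0 hγ1 hC hg s).norm
      ((summable_geometric_of_lt_one hγ0 hγ1).mul_left C)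
    intro t
    calc ‖γ ^ t * ((P ^ t).mulVec g) s‖ = γ ^ t * |((P ^ t).mulVec g) s| := by
          rw [Real.norm_eq_abs, abs_mul, abs_pow, abs_of_nonneg hγ0]
      _ ≤ γ ^ t * C := mul_le_mul_of_nonneg_left (pow_mulVec_abs_le hP0 hP1 hC hg t s)
          (pow_nonneg hγ0 t)
      _ = C * γ ^ t := mul_comm _ _
  refine h2.trans ?_
  rw [tsum_mul_left, tsum_geometric_of_lt_one hγ0 hγ1]

/-- Bellman-type shift: `Wv g = g + γ P (Wv g)`. -/
lemma Wv_shift {g : S → ℝ} {C : ℝ} (hC : 0 ≤ C) (hg : ∀ s, |g s| ≤ C) (s : S) :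
    Wv P γ g s = g s + γ * (P.mulVec (Wv P γ g)) s := by
  have hsum := summable_Wv hP0 hP1 hγ0 hγ1 hC hg s
  rw [Wv, Summable.tsum_eq_zero_add hsum]
  simp only [pow_zero, Matrix.one_mulVec, one_mul]
  congr 1
  have key : ∀ t : ℕ, γ ^ (t + 1) * ((P ^ (t + 1)).mulVec g) s
      = ∑ s', γ * (P s s' * (γ ^ t * ((P ^ t).mulVec g) s')) := by
    intro t
    have h1 : ((P ^ (t + 1)).mulVec g) = P.mulVec ((P ^ t).mulVec g) := by
      rw [Matrix.mulVec_mulVec, ← pow_succ']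
    rw [h1]
    simp only [Matrix.mulVec, dotProduct, Finset.mul_sum]
    exact Finset.sum_congr rfl fun s' _ => Finset.sum_congr rfl fun x _ => by ring
  calc ∑' t : ℕ, γ ^ (t + 1) * ((P ^ (t + 1)).mulVec g) s
      = ∑' t : ℕ, ∑ s', γ * (P s s' * (γ ^ t * ((P ^ t).mulVec g) s')) := by
        exact tsum_congr key
    _ = ∑ s', ∑' t : ℕ, γ * (P s s' * (γ ^ t * ((P ^ t).mulVec g) s')) := by
        refine Summable.tsum_finsetSum ?_
        intro s' _
        exact (((summable_Wv hP0 hP1 hγ0 hγ1 hC hg s').mul_left (P s s')).mul_left γ)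
    _ = ∑ s', γ * (P s s' * Wv P γ g s') := by
        refine Finset.sum_congr rfl fun s' _ => ?_
        rw [Wv, tsum_mul_left, tsum_mul_left]
    _ = γ * (P.mulVec (Wv P γ g)) s := by
        simp only [Matrix.mulVec, dotProduct, Finset.mul_sum]

end

section
include hP0 hP1 hγ0 hγ1

lemma pow_entry_le_one (t : ℕ) (s s' : S) : |(P ^ t) s s'| ≤ 1 := by
  rw [abs_of_nonneg (pow_entry_nonneg hP0 t s s')]
  calc (P ^ t) s s' ≤ ∑ k, (P ^ t) s k :=
        Finset.single_le_sum (fun k _ => pow_entry_nonneg hP0 t s k) (Finset.mem_univ s')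
    _ = 1 := pow_row_sum hP1 t s

/-- Telescoping identity used in the performance difference lemma. -/
lemma Wv_bellman_diff {u v : S → ℝ} {Cu Cv : ℝ} (hCu : 0 ≤ Cu) (hu : ∀ s, |u s| ≤ Cu)
    (hCv : 0 ≤ Cv) (hv : ∀ s, |v s| ≤ Cv) (s₀ : S) :
    Wv P γ (fun s => u s + γ * (P.mulVec v) s - v s) s₀ = Wv P γ u s₀ - v s₀ := by
  set a : ℕ → ℝ := fun t => γ ^ t * ((P ^ t).mulVec v) s₀ with ha
  set b : ℕ → ℝ := fun t => γ ^ t * ((P ^ t).mulVec u) s₀ with hb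
  have hsa : Summable a := summable_Wv hP0 hP1 hγ0 hγ1 hCv hv s₀
  have hsb : Summable b := summable_Wv hP0 hP1 hγ0 hγ1 hCu hu s₀
  have hsa1 : Summable fun t => a (t + 1) := (summable_nat_add_iff 1).mpr hsa
  have key : ∀ t : ℕ, γ ^ t * ((P ^ t).mulVec (fun s => u s + γ * (P.mulVec v) s - v s)) s₀
      = b t + (a (t + 1) - a t) := by
    intro t
    have h2 : (P ^ t).mulVec (fun s => u s + γ * (P.mulVec v) s - v s)
        = fun s => ((P ^ t).mulVec u) s + γ * ((P ^ (t+1)).mulVec v) s - ((P ^ t).mulVec v) s := by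
      have h3 : (fun s => u s + γ * (P.mulVec v) s - v s)
          = u + γ • (P.mulVec v) - v := by ext s; simp [Pi.smul_apply, smul_eq_mul]
      rw [h3, Matrix.mulVec_sub, Matrix.mulVec_add, Matrix.mulVec_smul,
        Matrix.mulVec_mulVec, ← pow_succ]
      ext s; simp [Pi.smul_apply, smul_eq_mul]
    rw [h2]
    simp only [ha, hb]
    ring
  have hsum3 : Summable fun t => b t + (a (t + 1) - a t) :=
    hsb.add (hsa1.sub hsa)
  rw [Wv, tsum_congr key, Summable.tsum_add hsb (hsa1.sub hsa), Summable.tsum_sub hsa1 hsa]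
  have ht : ∑' t, a (t + 1) = (∑' t, a t) - a 0 := by
    rw [Summable.tsum_eq_zero_add hsa]; ring
  rw [ht]
  have ha0 : a 0 = v s₀ := by simp [ha]
  rw [ha0]
  rw [Wv]
  ring

/-- Pairing a discounted visitation row with a bounded function. -/
lemma dot_Wv {g : S → ℝ} {C : ℝ} (hC : 0 ≤ C) (hg : ∀ s, |g s| ≤ C) (s₀ : S) :
    ∑ s, ((1 - γ) * ∑' t : ℕ, γ ^ t * (P ^ t) s₀ s) * g s = (1 - γ) * Wv P γ g s₀ := by
  have hsumE : ∀ s : S, Summable fun t : ℕ => γ ^ t * (P ^ t) s₀ s * g s := by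
    intro s
    refine Summable.of_norm_bounded
      ((summable_geometric_of_lt_one hγ0 hγ1).mul_left (1 + C)) ?_
    intro t
    rw [Real.norm_eq_abs, abs_mul, abs_mul, abs_pow, abs_of_nonneg hγ0]
    calc γ ^ t * |(P ^ t) s₀ s| * |g s| ≤ γ ^ t * 1 * C := by
          apply mul_le_mul (mul_le_mul_of_nonneg_left (pow_entry_le_one hP0 hP1 hγ0 hγ1 t s₀ s)
            (pow_nonneg hγ0 t)) (hg s) (abs_nonneg _)
          positivity
      _ ≤ (1 + C) * γ ^ t := by nlinarith [pow_nonneg hγ0 t]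
  calc ∑ s, ((1 - γ) * ∑' t : ℕ, γ ^ t * (P ^ t) s₀ s) * g s
      = (1 - γ) * ∑ s, ∑' t : ℕ, γ ^ t * (P ^ t) s₀ s * g s := by
        rw [Finset.mul_sum]
        refine Finset.sum_congr rfl fun s _ => ?_
        rw [mul_assoc, ← tsum_mul_right]
    _ = (1 - γ) * ∑' t : ℕ, ∑ s, γ ^ t * (P ^ t) s₀ s * g s := by
        rw [Summable.tsum_finsetSum fun s _ => hsumE s]
    _ = (1 - γ) * Wv P γ g s₀ := by
        rw [Wv]
        congr 1
        refine tsum_congr fun t => ?_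
        simp only [Matrix.mulVec, dotProduct, Finset.mul_sum]
        exact Finset.sum_congr rfl fun s _ => by ring

end
end Aux

namespace FinMDP
variable {M : FinMDP} (hM : M.Valid)

section
variable {π : M.S → M.A → ℝ} (hπ : M.IsPolicy π)
include hM hπ

lemma Pmat_nonneg : ∀ s s', 0 ≤ M.Pmat π s s' := fun s s' =>
  Finset.sum_nonneg fun a _ => mul_nonneg (hπ.1 s a) (hM.1 s a s')

lemma Pmat_rowsum : ∀ s, ∑ s', M.Pmat π s s' = 1 := by
  intro s
  simp only [Pmat, Matrix.of_apply]
  rw [Finset.sum_comm]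
  calc ∑ a, ∑ s', π s a * M.P s a s' = ∑ a, π s a * ∑ s', M.P s a s' := by
        simp [Finset.mul_sum]
    _ = 1 := by simp only [hM.2.1]; simpa using hπ.2 s

lemma rPol_abs_le : ∀ s, |M.rPol π s| ≤ 1 := by
  intro s
  have h0 : 0 ≤ M.rPol π s :=
    Finset.sum_nonneg fun a _ => mul_nonneg (hπ.1 s a) (hM.2.2.1 s a).1
  rw [abs_of_nonneg h0]
  calc M.rPol π s ≤ ∑ a, π s a * 1 :=
        Finset.sum_le_sum fun a _ => mul_le_mul_of_nonneg_left (hM.2.2.1 s a).2 (hπ.1 s a)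
    _ = 1 := by simpa using hπ.2 s

lemma V_eq_Wv : M.V π = Wv (M.Pmat π) M.γ (M.rPol π) := rfl

lemma V_abs_le : ∀ s, |M.V π s| ≤ 1 * (1 - M.γ)⁻¹ := fun s =>
  Wv_abs_le (Pmat_nonneg hM hπ) (Pmat_rowsum hM hπ) hM.2.2.2.1 hM.2.2.2.2
    zero_le_one (rPol_abs_le hM hπ) s

lemma V_bellman : ∀ s, M.V π s = M.rPol π s + M.γ * ((M.Pmat π).mulVec (M.V π)) s := by
  intro s
  rw [V_eq_Wv hM hπ]
  exact Wv_shift (Pmat_nonneg hM hπ) (Pmat_rowsum hM hπ) hM.2.2.2.1 hM.2.2.2.2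
    zero_le_one (rPol_abs_le hM hπ) s

lemma V_nonneg : ∀ s, 0 ≤ M.V π s := by
  intro s
  refine tsum_nonneg fun t => ?_
  refine mul_nonneg (pow_nonneg hM.2.2.2.1 t) ?_
  refine Finset.sum_nonneg fun s' _ => mul_nonneg (pow_entry_nonneg (Pmat_nonneg hM hπ) t s s') ?_
  exact Finset.sum_nonneg fun a _ => mul_nonneg (hπ.1 s' a) (hM.2.2.1 s' a).1

/-- `∑_a π'(a|s) Q^π(s,a) = r^{π'}(s) + γ (P^{π'} V^π)(s)`. -/
lemma polQ (π' : M.S → M.A → ℝ) (s : M.S) :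
    ∑ a, π' s a * M.Qf π s a = M.rPol π' s + M.γ * ((M.Pmat π').mulVec (M.V π)) s := by
  simp only [Qf, rPol, Pmat, Matrix.mulVec, dotProduct, Matrix.of_apply,
    mul_add, Finset.mul_sum, Finset.sum_mul, Finset.sum_add_distrib]
  congr 1
  rw [Finset.sum_comm]
  exact Finset.sum_congr rfl fun a _ => Finset.sum_congr rfl fun s' _ => by ring

lemma V_eq_sum_polQ (s : M.S) : M.V π s = ∑ a, π s a * M.Qf π s a := by
  rw [polQ hM hπ π s, ← V_bellman hM hπ s]

lemma Qf_nonneg (s : M.S) (a : M.A) : 0 ≤ M.Qf π s a := by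
  refine add_nonneg (hM.2.2.1 s a).1 (mul_nonneg hM.2.2.2.1 ?_)
  exact Finset.sum_nonneg fun s' _ => mul_nonneg (hM.1 s a s') (V_nonneg hM hπ s')

end

section
variable {π π' : M.S → M.A → ℝ} (hπ : M.IsPolicy π) (hπ' : M.IsPolicy π')
include hM hπ hπ'

/-- Performance difference lemma (per starting state). -/
lemma perf_diff (s₀ : M.S) :
    ∑ s, M.dvisit π' s₀ s * (∑ a, π' s a * M.Adv π s a)
      = (1 - M.γ) * (M.V π' s₀ - M.V π s₀) := by
  have hγ0 := hM.2.2.2.1; have hγ1 := hM.2.2.2.2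
  have hP0 := Pmat_nonneg hM hπ'; have hP1 := Pmat_rowsum hM hπ'
  set f : M.S → ℝ := fun s => ∑ a, π' s a * M.Adv π s a with hfdef
  have hfe : f = fun s => M.rPol π' s + M.γ * ((M.Pmat π').mulVec (M.V π)) s - M.V π s := by
    ext s
    simp only [hfdef, Adv, mul_sub, Finset.sum_sub_distrib, ← Finset.sum_mul, hπ'.2 s, one_mul]
    rw [polQ hM hπ π' s]
  have hinv0 : (0:ℝ) ≤ (1 - M.γ)⁻¹ := by
    have : (0:ℝ) < 1 - M.γ := by linarith
    positivity
  have hC : (0:ℝ) ≤ 1 + 2 * (1 - M.γ)⁻¹ := by linarith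
  have hfb : ∀ s, |f s| ≤ 1 + 2 * (1 - M.γ)⁻¹ := by
    intro s
    rw [hfe]
    have h1 := rPol_abs_le hM hπ' s
    have h2 : |((M.Pmat π').mulVec (M.V π)) s| ≤ 1 * (1 - M.γ)⁻¹ := by
      have := pow_mulVec_abs_le hP0 hP1 (by positivity : (0:ℝ) ≤ 1 * (1 - M.γ)⁻¹)
        (V_abs_le hM hπ) 1 s
      simpa using this
    have h3 := V_abs_le hM hπ s
    have h4 : |M.γ * ((M.Pmat π').mulVec (M.V π)) s| ≤ (1 - M.γ)⁻¹ := by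
      rw [abs_mul, abs_of_nonneg hγ0]
      calc M.γ * |((M.Pmat π').mulVec (M.V π)) s| ≤ 1 * (1 * (1 - M.γ)⁻¹) := by
            apply mul_le_mul (by linarith) h2 (abs_nonneg _) zero_le_one
        _ = (1 - M.γ)⁻¹ := by ring
    calc |M.rPol π' s + M.γ * ((M.Pmat π').mulVec (M.V π)) s - M.V π s|
        ≤ |M.rPol π' s + M.γ * ((M.Pmat π').mulVec (M.V π)) s| + |M.V π s| := abs_sub _ _
      _ ≤ (|M.rPol π' s| + |M.γ * ((M.Pmat π').mulVec (M.V π)) s|) + |M.V π s| := by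
          exact add_le_add (abs_add_le _ _) le_rfl
      _ ≤ 1 + 2 * (1 - M.γ)⁻¹ := by rw [one_mul] at h3; linarith
  calc ∑ s, M.dvisit π' s₀ s * f s
      = ∑ s, ((1 - M.γ) * ∑' t : ℕ, M.γ ^ t * ((M.Pmat π') ^ t) s₀ s) * f s := rfl
    _ = (1 - M.γ) * Wv (M.Pmat π') M.γ f s₀ := dot_Wv hP0 hP1 hγ0 hγ1 hC hfb s₀
    _ = (1 - M.γ) * (M.V π' s₀ - M.V π s₀) := by
        congr 1
        rw [hfe, Wv_bellman_diff hP0 hP1 hγ0 hγ1 zero_le_one (rPol_abs_le hM hπ')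
          (by positivity : (0:ℝ) ≤ 1 * (1 - M.γ)⁻¹) (V_abs_le hM hπ) s₀, ← V_eq_Wv hM hπ']

/-- Performance difference lemma (distribution version). -/
lemma perf_diff_dist (ρ : M.S → ℝ) :
    ∑ s, M.dvisitD π' ρ s * (∑ a, π' s a * M.Adv π s a)
      = (1 - M.γ) * (M.Vd π' ρ - M.Vd π ρ) := by
  calc ∑ s, M.dvisitD π' ρ s * (∑ a, π' s a * M.Adv π s a)
      = ∑ s₀, ρ s₀ * ∑ s, M.dvisit π' s₀ s * (∑ a, π' s a * M.Adv π s a) := by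
        simp only [dvisitD, Finset.sum_mul]
        rw [Finset.sum_comm]
        refine Finset.sum_congr rfl fun s₀ _ => ?_
        rw [Finset.mul_sum]
        exact Finset.sum_congr rfl fun s _ => by ring
    _ = ∑ s₀, ρ s₀ * ((1 - M.γ) * (M.V π' s₀ - M.V π s₀)) := by
        exact Finset.sum_congr rfl fun s₀ _ => by rw [perf_diff hM hπ hπ' s₀]
    _ = (1 - M.γ) * (M.Vd π' ρ - M.Vd π ρ) := by
        simp only [Vd]
        rw [← Finset.sum_sub_distrib, Finset.mul_sum]
        exact Finset.sum_congr rfl fun s₀ _ => by ring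

end

section
variable {π : M.S → M.A → ℝ} (hπ : M.IsPolicy π)
include hM hπ

lemma dvisit_nonneg (s₀ s : M.S) : 0 ≤ M.dvisit π s₀ s := by
  refine mul_nonneg (by linarith [hM.2.2.2.2]) (tsum_nonneg fun t => ?_)
  exact mul_nonneg (pow_nonneg hM.2.2.2.1 t) (pow_entry_nonneg (Pmat_nonneg hM hπ) t s₀ s)

lemma dvisit_self_ge (s : M.S) : 1 - M.γ ≤ M.dvisit π s s := by
  have hγ0 := hM.2.2.2.1; have hγ1 := hM.2.2.2.2
  have hsum : Summable fun t : ℕ => M.γ ^ t * ((M.Pmat π) ^ t) s s := by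
    refine Summable.of_norm_bounded
      (summable_geometric_of_lt_one hγ0 hγ1) ?_
    intro t
    rw [Real.norm_eq_abs, abs_mul, abs_pow, abs_of_nonneg hγ0]
    calc M.γ ^ t * |((M.Pmat π) ^ t) s s| ≤ M.γ ^ t * 1 :=
          mul_le_mul_of_nonneg_left
            (pow_entry_le_one (Pmat_nonneg hM hπ) (Pmat_rowsum hM hπ) hγ0 hγ1 t s s)
            (pow_nonneg hγ0 t)
      _ = M.γ ^ t := mul_one _
  have h0 : (1:ℝ) ≤ ∑' t : ℕ, M.γ ^ t * ((M.Pmat π) ^ t) s s := by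
    have := Summable.le_tsum hsum 0 (fun j _ => mul_nonneg (pow_nonneg hγ0 j)
      (pow_entry_nonneg (Pmat_nonneg hM hπ) j s s))
    simpa [Matrix.one_apply] using this
  calc 1 - M.γ = (1 - M.γ) * 1 := (mul_one _).symm
    _ ≤ M.dvisit π s s := by
        rw [dvisit]
        exact mul_le_mul_of_nonneg_left h0 (by linarith)

lemma dvisitD_nonneg (μ : M.S → ℝ) (hμ : ∀ s, 0 ≤ μ s) (s : M.S) : 0 ≤ M.dvisitD π μ s :=
  Finset.sum_nonneg fun s₀ _ => mul_nonneg (hμ s₀) (dvisit_nonneg hM hπ s₀ s)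

lemma dvisitD_ge (μ : M.S → ℝ) (hμ : ∀ s, 0 ≤ μ s) (s : M.S) :
    (1 - M.γ) * μ s ≤ M.dvisitD π μ s := by
  calc (1 - M.γ) * μ s = μ s * (1 - M.γ) := mul_comm _ _
    _ ≤ μ s * M.dvisit π s s := mul_le_mul_of_nonneg_left (dvisit_self_ge hM hπ s) (hμ s)
    _ ≤ M.dvisitD π μ s := by
        refine Finset.single_le_sum (f := fun s₀ => μ s₀ * M.dvisit π s₀ s) (fun s₀ _ => ?_) (Finset.mem_univ s)
        exact mul_nonneg (hμ s₀) (dvisit_nonneg hM hπ s₀ s)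

end
end FinMDP

/-- **Gradient domination for the direct parameterization.** -/
theorem gradient_domination (M : FinMDP) (hM : M.Valid)
    (π : M.S → M.A → ℝ) (hπ : M.IsPolicy π)
    (πstar : M.S → M.A → ℝ) (hstar : M.IsPolicy πstar)
    (hopt : ∀ π' : M.S → M.A → ℝ, M.IsPolicy π' → ∀ s, M.V π' s ≤ M.V πstar s)
    (μ ρ : M.S → ℝ) (hμ : IsDist μ) (hρ : IsDist ρ) (hμpos : ∀ s, 0 < μ s) :
    M.Vd πstar ρ - M.Vd π ρ ≤
        (⨆ s, M.dvisitD πstar ρ s / M.dvisitD π μ s) *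
          (⨆ pb : {p : M.S → M.A → ℝ // M.IsPolicy p},
            ∑ s, ∑ a, (pb.1 s a - π s a) *
              ((1 / (1 - M.γ)) * M.dvisitD π μ s * M.Qf π s a)) ∧
      M.Vd πstar ρ - M.Vd π ρ ≤
        (1 / (1 - M.γ)) * (⨆ s, M.dvisitD πstar ρ s / μ s) *
          (⨆ pb : {p : M.S → M.A → ℝ // M.IsPolicy p},
            ∑ s, ∑ a, (pb.1 s a - π s a) *
              ((1 / (1 - M.γ)) * M.dvisitD π μ s * M.Qf π s a)) := by
  have hγ0 := hM.2.2.2.1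
  have hγ1 := hM.2.2.2.2
  have h1γ : (0:ℝ) < 1 - M.γ := by linarith
  have hne : (1 - M.γ) ≠ 0 := h1γ.ne'
  have hinv : (0:ℝ) ≤ 1 / (1 - M.γ) := by positivity
  haveI hPnon : Nonempty {p : M.S → M.A → ℝ // M.IsPolicy p} := ⟨⟨π, hπ⟩⟩
  cases isEmpty_or_nonempty M.S with
  | inl hS =>
    have hVd : ∀ (p : M.S → M.A → ℝ), M.Vd p ρ = 0 := fun p => by
      simp [FinMDP.Vd, Finset.univ_eq_empty]
    have hsup1 : (⨆ s, M.dvisitD πstar ρ s / M.dvisitD π μ s) = 0 :=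
      (iSup_of_empty' _).trans Real.sSup_empty
    have hsup2 : (⨆ s, M.dvisitD πstar ρ s / μ s) = 0 :=
      (iSup_of_empty' _).trans Real.sSup_empty
    have hGv : (⨆ pb : {p : M.S → M.A → ℝ // M.IsPolicy p},
        ∑ s, ∑ a, (pb.1 s a - π s a) * ((1 / (1 - M.γ)) * M.dvisitD π μ s * M.Qf π s a)) = 0 := by
      have h0 : ∀ pb : {p : M.S → M.A → ℝ // M.IsPolicy p},
          (∑ s, ∑ a, (pb.1 s a - π s a) * ((1 / (1 - M.γ)) * M.dvisitD π μ s * M.Qf π s a)) = 0 :=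
        fun pb => by simp [Finset.univ_eq_empty]
      simp only [h0]
      exact ciSup_const
    rw [hVd, hVd, hsup1, hsup2, hGv]
    norm_num
  | inr hS =>
    have hA : Nonempty M.A := by
      by_contra h
      haveI : IsEmpty M.A := not_nonempty_iff.mp h
      have h1 := hπ.2 (Classical.arbitrary M.S)
      simp [Finset.univ_eq_empty] at h1
    haveI := hA
    have hex : ∀ s : M.S, ∃ b : M.A, ∀ a, M.Qf π s a ≤ M.Qf π s b :=
      fun s => Finite.exists_max (M.Qf π s)
    choose a0 ha0 using hex
    set d : M.S → ℝ := M.dvisitD π μ with hd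
    have hdpos : ∀ s, 0 < d s := fun s =>
      lt_of_lt_of_le (by have := hμpos s; positivity)
        (FinMDP.dvisitD_ge hM hπ μ (fun s => (hμpos s).le) s)
    set ds : M.S → ℝ := M.dvisitD πstar ρ with hds
    have hds0 : ∀ s, 0 ≤ ds s := FinMDP.dvisitD_nonneg hM hstar ρ hρ.1
    set m : M.S → ℝ := fun s => M.Qf π s (a0 s) - M.V π s with hm
    have hsum_le_max : ∀ (p : M.S → M.A → ℝ), M.IsPolicy p → ∀ s,
        ∑ a, p s a * M.Qf π s a ≤ M.Qf π s (a0 s) := by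
      intro p hp s
      calc ∑ a, p s a * M.Qf π s a ≤ ∑ a, p s a * M.Qf π s (a0 s) :=
            Finset.sum_le_sum fun a _ => mul_le_mul_of_nonneg_left (ha0 s a) (hp.1 s a)
        _ = M.Qf π s (a0 s) := by rw [← Finset.sum_mul, hp.2 s, one_mul]
    have hm0 : ∀ s, 0 ≤ m s := by
      intro s
      have hV : M.V π s ≤ M.Qf π s (a0 s) := by
        rw [FinMDP.V_eq_sum_polQ hM hπ s]
        exact hsum_le_max π hπ s
      simp only [hm]
      linarith
    set T : ℝ := ∑ s, (1 / (1 - M.γ)) * d s * m s with hT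
    have hval : ∀ (p : M.S → M.A → ℝ), M.IsPolicy p →
        (∑ s, ∑ a, (p s a - π s a) * ((1 / (1 - M.γ)) * d s * M.Qf π s a))
          = ∑ s, (1 / (1 - M.γ)) * d s * ((∑ a, p s a * M.Qf π s a) - M.V π s) := by
      intro p hp
      refine Finset.sum_congr rfl fun s _ => ?_
      rw [FinMDP.V_eq_sum_polQ hM hπ s, ← Finset.sum_sub_distrib, Finset.mul_sum]
      refine Finset.sum_congr rfl fun a _ => by ring
    have hub : ∀ (p : M.S → M.A → ℝ), M.IsPolicy p →
        (∑ s, ∑ a, (p s a - π s a) * ((1 / (1 - M.γ)) * d s * M.Qf π s a)) ≤ T := by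
      intro p hp
      rw [hval p hp, hT]
      refine Finset.sum_le_sum fun s _ => ?_
      refine mul_le_mul_of_nonneg_left ?_ (by have := (hdpos s).le; positivity)
      simp only [hm]
      exact sub_le_sub_right (hsum_le_max p hp s) _
    have hbdd : BddAbove (Set.range fun pb : {p : M.S → M.A → ℝ // M.IsPolicy p} =>
        ∑ s, ∑ a, (pb.1 s a - π s a) * ((1 / (1 - M.γ)) * d s * M.Qf π s a)) := by
      refine ⟨T, ?_⟩
      rintro x ⟨pb, rfl⟩
      exact hub pb.1 pb.2
    set G : ℝ := ⨆ pb : {p : M.S → M.A → ℝ // M.IsPolicy p},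
        ∑ s, ∑ a, (pb.1 s a - π s a) * ((1 / (1 - M.γ)) * d s * M.Qf π s a) with hG
    have hGT : T ≤ G := by
      set pg : M.S → M.A → ℝ := fun s a => if a = a0 s then 1 else 0 with hpgdef
      have hpg : M.IsPolicy pg := by
        constructor
        · intro s a; simp only [hpgdef]; split <;> norm_num
        · intro s; simp [hpgdef]
      have hpgval : (∑ s, ∑ a, (pg s a - π s a) * ((1 / (1 - M.γ)) * d s * M.Qf π s a)) = T := by
        rw [hval pg hpg, hT]
        refine Finset.sum_congr rfl fun s _ => ?_
        congr 1
        simp only [hm]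
        congr 1
        simp [hpgdef, ite_mul]
      calc T = _ := hpgval.symm
        _ ≤ G := le_ciSup hbdd ⟨pg, hpg⟩
    have hG0 : 0 ≤ G := by
      have hzero : (∑ s, ∑ a, (π s a - π s a) * ((1 / (1 - M.γ)) * d s * M.Qf π s a)) = 0 := by
        simp
      calc (0:ℝ) = ∑ s, ∑ a, (π s a - π s a) * ((1 / (1 - M.γ)) * d s * M.Qf π s a) :=
            hzero.symm
        _ ≤ G := le_ciSup hbdd ⟨π, hπ⟩
    have hpd := FinMDP.perf_diff_dist hM hπ hstar ρ
    have hdiff : M.Vd πstar ρ - M.Vd π ρ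
        = (1 / (1 - M.γ)) * ∑ s, ds s * (∑ a, πstar s a * M.Adv π s a) := by
      rw [hpd, one_div, inv_mul_cancel_left₀ hne]
    have hfle : ∀ s, (∑ a, πstar s a * M.Adv π s a) ≤ m s := by
      intro s
      have he : ∑ a, πstar s a * M.Adv π s a = (∑ a, πstar s a * M.Qf π s a) - M.V π s := by
        simp only [FinMDP.Adv, mul_sub, Finset.sum_sub_distrib, ← Finset.sum_mul, hstar.2 s,
          one_mul]
      rw [he]
      simp only [hm]
      exact sub_le_sub_right (hsum_le_max πstar hstar s) _
    set K : ℝ := ⨆ s, ds s / d s with hK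
    have hbddK : BddAbove (Set.range fun s => ds s / d s) := (Set.finite_range _).bddAbove
    have hKle : ∀ s, ds s / d s ≤ K := fun s => le_ciSup hbddK s
    have hK0 : 0 ≤ K := by
      obtain ⟨s⟩ := hS
      exact le_trans (div_nonneg (hds0 s) (hdpos s).le) (hKle s)
    have hmain : M.Vd πstar ρ - M.Vd π ρ ≤ K * T := by
      rw [hdiff]
      have step1 : ∑ s, ds s * (∑ a, πstar s a * M.Adv π s a) ≤ ∑ s, K * (d s * m s) := by
        refine Finset.sum_le_sum fun s _ => ?_
        calc ds s * (∑ a, πstar s a * M.Adv π s a) ≤ ds s * m s :=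
              mul_le_mul_of_nonneg_left (hfle s) (hds0 s)
          _ = ds s / d s * (d s * m s) := by
              rw [← mul_assoc, div_mul_cancel₀ _ (hdpos s).ne']
          _ ≤ K * (d s * m s) :=
              mul_le_mul_of_nonneg_right (hKle s) (mul_nonneg (hdpos s).le (hm0 s))
      calc (1 / (1 - M.γ)) * ∑ s, ds s * (∑ a, πstar s a * M.Adv π s a)
          ≤ (1 / (1 - M.γ)) * ∑ s, K * (d s * m s) := mul_le_mul_of_nonneg_left step1 hinv
        _ = K * T := by
            rw [hT, Finset.mul_sum, Finset.mul_sum]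
            exact Finset.sum_congr rfl fun s _ => by ring
    have hfirst : M.Vd πstar ρ - M.Vd π ρ ≤ K * G :=
      hmain.trans (mul_le_mul_of_nonneg_left hGT hK0)
    refine ⟨hfirst, ?_⟩
    have hbddK' : BddAbove (Set.range fun s => ds s / μ s) := (Set.finite_range _).bddAbove
    have hK2 : K ≤ (1 / (1 - M.γ)) * ⨆ s, ds s / μ s := by
      refine ciSup_le fun s => ?_
      have h1 : ds s / d s ≤ ds s / ((1 - M.γ) * μ s) :=
        div_le_div_of_nonneg_left (hds0 s) (by have := hμpos s; positivity)
          (FinMDP.dvisitD_ge hM hπ μ (fun s => (hμpos s).le) s)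
      have h2 : ds s / ((1 - M.γ) * μ s) = (1 / (1 - M.γ)) * (ds s / μ s) := by
        rw [div_mul_eq_div_div_swap, div_eq_mul_inv (ds s / μ s), one_div, mul_comm]
      refine h1.trans ?_
      rw [h2]
      exact mul_le_mul_of_nonneg_left (le_ciSup hbddK' s) hinv
    refine hfirst.trans ?_
    exact mul_le_mul_of_nonneg_right hK2 hG0
end

section
/- (Policy gradient formula for the softmax parameterization) For every finite discounted MDP and state distribution μ, the map θ ↦ V^{π_θ}(μ) on ℝ^{S×A} is differentiable and its partial derivatives are ∂V^{π_θ}(μ)/∂θ_{s,a} = (1/(1−γ)) · d^{π_θ}_μ(s) · π_θ(a|s) · A^{π_θ}(s,a). -/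
open scoped BigOperators InnerProductSpace

namespace PGaux

attribute [local instance] Matrix.linftyOpNormedAddCommGroup Matrix.linftyOpNormedSpace
  Matrix.linftyOpNormedRing Matrix.linftyOpNormedAlgebra

open Matrix

lemma matrix_norm_le {S : Type} [Fintype S] (A : Matrix S S ℝ) {c : ℝ} (hc : 0 ≤ c)
    (h : ∀ i, ∑ j, |A i j| ≤ c) : ‖A‖ ≤ c := by
  rw [Matrix.linfty_opNorm_def, ← Real.coe_toNNReal c hc]
  norm_cast
  apply Finset.sup_le
  intro i _
  rw [← NNReal.coe_le_coe, Real.coe_toNNReal c hc, NNReal.coe_sum]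
  simpa [Real.norm_eq_abs, coe_nnnorm] using h i

variable (M : FinMDP)

/-- The resolvent matrix `(I - γ P_π)⁻¹`. -/
noncomputable def Minv (π : M.S → M.A → ℝ) : Matrix M.S M.S ℝ :=
  Ring.inverse ((1 : Matrix M.S M.S ℝ) - M.γ • M.Pmat π)

lemma Pmat_nonneg (hM : M.Valid) (π : M.S → M.A → ℝ) (hπ : ∀ s a, 0 ≤ π s a) (s s' : M.S) :
    0 ≤ M.Pmat π s s' :=
  Finset.sum_nonneg fun a _ => mul_nonneg (hπ s a) (hM.1 s a s')

lemma norm_lt (hM : M.Valid) (π : M.S → M.A → ℝ) (hπ : ∀ s a, 0 ≤ π s a)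
    (hπ1 : ∀ s, ∑ a, π s a ≤ 1) : ‖M.γ • M.Pmat π‖ < 1 := by
  obtain ⟨hP0, hP1, hr, hγ0, hγ1⟩ := hM
  have hle : ‖M.γ • M.Pmat π‖ ≤ M.γ := by
    apply matrix_norm_le _ hγ0
    intro i
    have : ∀ j, |(M.γ • M.Pmat π) i j| = M.γ * M.Pmat π i j := by
      intro j
      rw [Matrix.smul_apply, smul_eq_mul, abs_of_nonneg]
      exact mul_nonneg hγ0 (Pmat_nonneg M ⟨hP0, hP1, hr, hγ0, hγ1⟩ π hπ i j)
    simp_rw [this, ← Finset.mul_sum]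
    have : ∑ j, M.Pmat π i j ≤ 1 := by
      have h2 : ∑ j, M.Pmat π i j = ∑ a, π i a := by
        simp only [FinMDP.Pmat, Matrix.of_apply]
        rw [Finset.sum_comm]
        congr 1
        ext a
        rw [← Finset.mul_sum, hP1 i a, mul_one]
      rw [h2]; exact hπ1 i
    calc M.γ * ∑ j, M.Pmat π i j ≤ M.γ * 1 := by
          apply mul_le_mul_of_nonneg_left this hγ0
      _ = M.γ := mul_one _
  exact lt_of_le_of_lt hle hγ1


/-- CLM extracting `(B.mulVec v) s`. -/
noncomputable def mvCLM {S : Type} [Fintype S] [DecidableEq S] (v : S → ℝ) (s : S) :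
    Matrix S S ℝ →L[ℝ] ℝ :=
  LinearMap.toContinuousLinearMap
    { toFun := fun B => B.mulVec v s
      map_add' := fun A B => by simp [Matrix.add_mulVec]
      map_smul' := fun c B => by simp [Matrix.smul_mulVec] }

/-- CLM extracting the `(i,j)` entry. -/
noncomputable def entryCLM {S : Type} [Fintype S] [DecidableEq S] (i j : S) :
    Matrix S S ℝ →L[ℝ] ℝ :=
  LinearMap.toContinuousLinearMap
    { toFun := fun B => B i j
      map_add' := fun A B => rfl
      map_smul' := fun c B => rfl }

variable {M} in
lemma unit_of_norm (h : ‖M.γ • M.Pmat π‖ < 1) :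
    IsUnit ((1 : Matrix M.S M.S ℝ) - M.γ • M.Pmat π) :=
  isUnit_one_sub_of_norm_lt_one h

variable {M} in
lemma Minv_mul (h : ‖M.γ • M.Pmat π‖ < 1) :
    Minv M π * ((1 : Matrix M.S M.S ℝ) - M.γ • M.Pmat π) = 1 :=
  Ring.inverse_mul_cancel _ (unit_of_norm h)

variable {M} in
lemma mul_Minv (h : ‖M.γ • M.Pmat π‖ < 1) :
    ((1 : Matrix M.S M.S ℝ) - M.γ • M.Pmat π) * Minv M π = 1 :=
  Ring.mul_inverse_cancel _ (unit_of_norm h)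

variable {M} in
lemma Minv_eq_tsum (h : ‖M.γ • M.Pmat π‖ < 1) :
    Minv M π = ∑' t : ℕ, (M.γ • M.Pmat π) ^ t :=
  (geom_series_eq_inverse _ h).symm

variable {M} in
/-- `V` as a matrix-vector product with the resolvent. -/
lemma V_eq (h : ‖M.γ • M.Pmat π‖ < 1) (s : M.S) :
    M.V π s = (Minv M π).mulVec (M.rPol π) s := by
  have hs := summable_geometric_of_norm_lt_one h
  have h1 : M.V π s = ∑' t : ℕ, (mvCLM (M.rPol π) s) ((M.γ • M.Pmat π) ^ t) := by
    unfold FinMDP.V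
    congr 1
    funext t
    simp [mvCLM, smul_pow, Matrix.smul_mulVec]
  rw [h1, ← ContinuousLinearMap.map_tsum (mvCLM (M.rPol π) s) hs, ← Minv_eq_tsum h]
  rfl

variable {M} in
lemma dvisit_eq (h : ‖M.γ • M.Pmat π‖ < 1) (s₀ s : M.S) :
    M.dvisit π s₀ s = (1 - M.γ) * Minv M π s₀ s := by
  have hs := summable_geometric_of_norm_lt_one h
  unfold FinMDP.dvisit
  congr 1
  have h1 : ∀ t : ℕ, M.γ ^ t * (M.Pmat π ^ t) s₀ s = (entryCLM s₀ s) ((M.γ • M.Pmat π) ^ t) := by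
    intro t
    simp [entryCLM, smul_pow]
    exact Or.inl rfl
  simp_rw [h1]
  rw [← ContinuousLinearMap.map_tsum (entryCLM s₀ s) hs, ← Minv_eq_tsum h]
  rfl

variable {M} in
/-- Bellman equation in vector form. -/
lemma bellman (h : ‖M.γ • M.Pmat π‖ < 1) (s : M.S) :
    M.V π s = M.rPol π s + M.γ * ∑ s', M.Pmat π s s' * M.V π s' := by
  have hv : (fun s => M.V π s) = (Minv M π).mulVec (M.rPol π) := funext (V_eq h)
  have h2 : (((1 : Matrix M.S M.S ℝ) - M.γ • M.Pmat π).mulVec fun s => M.V π s) = M.rPol π := by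
    rw [hv, Matrix.mulVec_mulVec, mul_Minv h, Matrix.one_mulVec]
  have h3 := congrFun h2 s
  simp only [Matrix.sub_mulVec, Matrix.one_mulVec, Matrix.smul_mulVec,
    Pi.sub_apply, Pi.smul_apply, smul_eq_mul] at h3
  have h4 : (M.Pmat π).mulVec (fun s => M.V π s) s = ∑ s', M.Pmat π s s' * M.V π s' := by
    simp [Matrix.mulVec, dotProduct]
  rw [← h4]
  linarith

variable {M} in
/-- `V(s) = ∑ₐ π(a|s) Q(s,a)`. -/
lemma V_eq_sum_Q (h : ‖M.γ • M.Pmat π‖ < 1) (s : M.S) :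
    ∑ a, π s a * M.Qf π s a = M.V π s := by
  rw [bellman h s]
  unfold FinMDP.Qf FinMDP.rPol
  rw [Finset.sum_congr rfl (fun a _ => mul_add (π s a) (M.r s a) _)]
  rw [Finset.sum_add_distrib]
  congr 1
  have : ∀ a, π s a * (M.γ * ∑ s', M.P s a s' * M.V π s') =
      M.γ * ∑ s', π s a * M.P s a s' * M.V π s' := by
    intro a
    simp only [Finset.mul_sum]
    exact Finset.sum_congr rfl fun s' _ => by ring
  simp_rw [this, ← Finset.mul_sum]
  congr 1
  rw [Finset.sum_comm]
  congr 1; funext s'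
  simp only [FinMDP.Pmat, Matrix.of_apply, Finset.sum_mul]

section Softmax

variable (M : FinMDP)

lemma expsum_pos [Nonempty M.A] (θ : EuclideanSpace ℝ (M.S × M.A)) (s : M.S) :
    0 < ∑ a', Real.exp (θ (s, a')) :=
  Finset.sum_pos (fun a _ => Real.exp_pos _) Finset.univ_nonempty

lemma softmax_nonneg (θ : EuclideanSpace ℝ (M.S × M.A)) (s : M.S) (a : M.A) :
    0 ≤ M.softmaxPolicy θ s a := by
  unfold FinMDP.softmaxPolicy
  positivity

lemma softmax_sum_le (θ : EuclideanSpace ℝ (M.S × M.A)) (s : M.S) :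
    ∑ a, M.softmaxPolicy θ s a ≤ 1 := by
  cases isEmpty_or_nonempty M.A
  · simp
  · unfold FinMDP.softmaxPolicy
    rw [← Finset.sum_div, div_le_one (expsum_pos M θ s)]

lemma softmax_sum_one [Nonempty M.A] (θ : EuclideanSpace ℝ (M.S × M.A)) (s : M.S) :
    ∑ a, M.softmaxPolicy θ s a = 1 := by
  unfold FinMDP.softmaxPolicy
  rw [← Finset.sum_div, div_self (ne_of_gt (expsum_pos M θ s))]

lemma softmax_diff [Nonempty M.A] (s : M.S) (a : M.A) :
    Differentiable ℝ (fun θ : EuclideanSpace ℝ (M.S × M.A) => M.softmaxPolicy θ s a) := by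
  unfold FinMDP.softmaxPolicy
  simp only [div_eq_mul_inv]
  exact Differentiable.mul
    (Real.differentiable_exp.comp (EuclideanSpace.proj (𝕜 := ℝ) ((s, a) : M.S × M.A) :
      EuclideanSpace ℝ (M.S × M.A) →L[ℝ] ℝ).differentiable)
    (Differentiable.inv
      (Differentiable.fun_sum fun a' _ =>
        Real.differentiable_exp.comp (show Differentiable ℝ (fun θ : EuclideanSpace ℝ (M.S × M.A) => θ (s, a')) from
          by exact (EuclideanSpace.proj (𝕜 := ℝ) ((s, a') : M.S × M.A) :
            EuclideanSpace ℝ (M.S × M.A) →L[ℝ] ℝ).differentiable))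
      (fun θ => ne_of_gt (expsum_pos M θ s)))

/-- `Pmat` as a continuous linear map. -/
noncomputable def PmatCLM : (M.S → M.A → ℝ) →L[ℝ] Matrix M.S M.S ℝ :=
  LinearMap.toContinuousLinearMap
    { toFun := fun p => M.Pmat p
      map_add' := fun p q => by
        ext s s'
        simp [FinMDP.Pmat, add_mul, Finset.sum_add_distrib]
      map_smul' := fun c p => by
        ext s s'
        simp [FinMDP.Pmat, Finset.mul_sum, mul_assoc] }

lemma sigma_diff [Nonempty M.A] :
    Differentiable ℝ (fun θ : EuclideanSpace ℝ (M.S × M.A) => (M.softmaxPolicy θ : M.S → M.A → ℝ)) := by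
  apply differentiable_pi.2
  intro s
  apply differentiable_pi.2
  intro a
  exact softmax_diff M s a

lemma Phi_diff [Nonempty M.A] :
    Differentiable ℝ (fun θ : EuclideanSpace ℝ (M.S × M.A) =>
      ((1 : Matrix M.S M.S ℝ) - M.γ • M.Pmat (M.softmaxPolicy θ))) := by
  have : (fun θ : EuclideanSpace ℝ (M.S × M.A) =>
      ((1 : Matrix M.S M.S ℝ) - M.γ • M.Pmat (M.softmaxPolicy θ))) =
      (fun θ => (1 : Matrix M.S M.S ℝ) - M.γ • (PmatCLM M) (M.softmaxPolicy θ)) := rfl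
  rw [this]
  exact (differentiable_const _).sub (((PmatCLM M).differentiable.comp (sigma_diff M)).const_smul M.γ)

lemma Minv_diff [Nonempty M.A] (hM : M.Valid) :
    Differentiable ℝ (fun θ : EuclideanSpace ℝ (M.S × M.A) => Minv M (M.softmaxPolicy θ)) := by
  intro θ
  have hu : IsUnit ((1 : Matrix M.S M.S ℝ) - M.γ • M.Pmat (M.softmaxPolicy θ)) :=
    unit_of_norm (norm_lt M hM _ (softmax_nonneg M θ) (fun s => softmax_sum_le M θ s))
  exact (differentiableAt_inverse hu).comp θ (Phi_diff M θ)

lemma rPol_diff [Nonempty M.A] (s : M.S) :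
    Differentiable ℝ (fun θ : EuclideanSpace ℝ (M.S × M.A) => M.rPol (M.softmaxPolicy θ) s) := by
  unfold FinMDP.rPol
  exact Differentiable.fun_sum fun a _ => (softmax_diff M s a).mul_const _

lemma V_softmax_diff [Nonempty M.A] (hM : M.Valid) (s : M.S) :
    Differentiable ℝ (fun θ : EuclideanSpace ℝ (M.S × M.A) => M.V (M.softmaxPolicy θ) s) := by
  have heq : (fun θ : EuclideanSpace ℝ (M.S × M.A) => M.V (M.softmaxPolicy θ) s) =
      fun θ => ∑ s', (entryCLM s s') (Minv M (M.softmaxPolicy θ)) * M.rPol (M.softmaxPolicy θ) s' := by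
    funext θ
    rw [V_eq (norm_lt M hM _ (softmax_nonneg M θ) (fun s' => softmax_sum_le M θ s')) s]
    simp [Matrix.mulVec, dotProduct, entryCLM]
    rfl
  rw [heq]
  exact Differentiable.fun_sum fun s' _ =>
    ((entryCLM s s').differentiable.comp (Minv_diff M hM)).mul (rPol_diff M s')

lemma Vd_softmax_diff [Nonempty M.A] (hM : M.Valid) (μ : M.S → ℝ) :
    Differentiable ℝ (fun θ : EuclideanSpace ℝ (M.S × M.A) => M.Vd (M.softmaxPolicy θ) μ) := by
  unfold FinMDP.Vd
  exact Differentiable.fun_sum fun s _ => (V_softmax_diff M hM s).const_mul _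

end Softmax

section DerivComp

variable (M : FinMDP)

/-- Derivative of the softmax policy entries in the direction `single (s,a) 1`. -/
noncomputable def dpi (θ : EuclideanSpace ℝ (M.S × M.A)) (s : M.S) (a : M.A)
    (s' : M.S) (a' : M.A) : ℝ :=
  if s' = s then
    M.softmaxPolicy θ s a' * ((if a' = a then (1:ℝ) else 0) - M.softmaxPolicy θ s a)
  else 0

lemma line_hasDerivAt (θ u : EuclideanSpace ℝ (M.S × M.A)) (t₀ : ℝ) :
    HasDerivAt (fun t : ℝ => θ + t • u) u t₀ := by
  simpa using ((hasDerivAt_id t₀).smul_const u).const_add θ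

lemma line_zero (θ u : EuclideanSpace ℝ (M.S × M.A)) : θ + (0:ℝ) • u = θ := by
  simp

lemma softmax_line_hasDerivAt [Nonempty M.A] (θ : EuclideanSpace ℝ (M.S × M.A))
    (s : M.S) (a : M.A) (s' : M.S) (a' : M.A) :
    HasDerivAt
      (fun t : ℝ => M.softmaxPolicy (θ + t • EuclideanSpace.single ((s,a) : M.S × M.A) (1:ℝ)) s' a')
      (dpi M θ s a s' a') 0 := by
  set u : EuclideanSpace ℝ (M.S × M.A) := EuclideanSpace.single ((s,a) : M.S × M.A) (1:ℝ) with hu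
  have happ : ∀ (t : ℝ) (i : M.S × M.A), (θ + t • u) i = θ i + t * u i := by
    intro t i
    simp [hu]
  have hN : ∀ (b : M.A), HasDerivAt (fun t : ℝ => Real.exp ((θ + t • u) (s', b)))
      (Real.exp (θ (s', b)) * u (s', b)) 0 := by
    intro b
    have h1 : HasDerivAt (fun t : ℝ => θ (s', b) + t * u (s', b)) (u (s', b)) 0 := by
      simpa using ((hasDerivAt_id (0:ℝ)).mul_const (u (s', b))).const_add (θ (s', b))
    have h2 := h1.exp
    simp only [mul_zero, add_zero] at h2
    have : (fun t : ℝ => Real.exp ((θ + t • u) (s', b))) =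
        fun t : ℝ => Real.exp (θ (s', b) + t * u (s', b)) := by
      funext t; rw [happ]
    rw [this]
    simpa using h2
  have hD : HasDerivAt (fun t : ℝ => ∑ b, Real.exp ((θ + t • u) (s', b)))
      (∑ b, Real.exp (θ (s', b)) * u (s', b)) 0 :=
    HasDerivAt.fun_sum fun b _ => hN b
  have hdiv := (hN a').fun_div hD (by
    have : (0:ℝ) < ∑ b, Real.exp ((θ + (0:ℝ) • u) (s', b)) := expsum_pos M _ s'
    exact ne_of_gt this)
  have hfun : (fun t : ℝ => Real.exp ((θ + t • u) (s', a')) / ∑ b, Real.exp ((θ + t • u) (s', b))) =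
      fun t : ℝ => M.softmaxPolicy (θ + t • u) s' a' := rfl
  rw [hfun] at hdiv
  refine hdiv.congr_deriv (Eq.symm ?_)
  have h0 : ∀ i, (θ + (0:ℝ) • u) i = θ i := by intro i; rw [happ]; ring
  simp only [h0]
  set D : ℝ := ∑ b, Real.exp (θ (s', b)) with hD'
  have hDpos : 0 < D := by
    have := expsum_pos M θ s'
    exact this
  have husa : ∀ b : M.A, u (s', b) = if s' = s ∧ b = a then (1:ℝ) else 0 := by
    intro b
    rw [hu, EuclideanSpace.single_apply]
    by_cases h : (s', b) = (s, a)
    · rw [if_pos h, if_pos]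
      exact ⟨congrArg Prod.fst h, congrArg Prod.snd h⟩
    · rw [if_neg h, if_neg]
      intro ⟨h1, h2⟩
      exact h (Prod.ext h1 h2)
  by_cases hs : s' = s
  · subst hs
    simp only [husa, true_and]
    have hsum : ∑ b, Real.exp (θ (s', b)) * (if b = a then (1:ℝ) else 0) = Real.exp (θ (s', a)) := by
      rw [Finset.sum_eq_single a]
      · simp
      · intro b _ hb; simp [hb]
      · intro h; exact absurd (Finset.mem_univ a) h
    rw [hsum]
    unfold dpi FinMDP.softmaxPolicy
    rw [if_pos rfl]
    rw [← hD']
    field_simp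
  · simp only [husa, hs, false_and, if_false, mul_zero]
    unfold dpi
    rw [if_neg hs]
    simp
end DerivComp
section Main

variable (M : FinMDP)

lemma fderiv_dir_eq [Nonempty M.A] (hM : M.Valid) (μ : M.S → ℝ)
    (θ : EuclideanSpace ℝ (M.S × M.A)) (s : M.S) (a : M.A) :
    fderiv ℝ (fun θ' : EuclideanSpace ℝ (M.S × M.A) => M.Vd (M.softmaxPolicy θ') μ) θ
        (EuclideanSpace.single ((s, a) : M.S × M.A) (1:ℝ)) =
      ∑ s₀, μ s₀ * (Minv M (M.softmaxPolicy θ)).mulVec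
          (fun s' => ∑ a', dpi M θ s a s' a' * M.Qf (M.softmaxPolicy θ) s' a') s₀ := by
  set u : EuclideanSpace ℝ (M.S × M.A) := EuclideanSpace.single ((s,a) : M.S × M.A) (1:ℝ) with hu
  set π₀ : M.S → M.A → ℝ := M.softmaxPolicy θ with hπ₀
  set c : ℝ → EuclideanSpace ℝ (M.S × M.A) := fun t => θ + t • u with hc
  have hc0 : c 0 = θ := by simp only [hc]; exact line_zero M θ u
  have hnorm : ∀ t, ‖M.γ • M.Pmat (M.softmaxPolicy (c t))‖ < 1 := fun t =>
    norm_lt M hM _ (softmax_nonneg M _) (softmax_sum_le M _)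
  have hnorm0 : ‖M.γ • M.Pmat π₀‖ < 1 := by
    have := hnorm 0
    rwa [hc0] at this
  set g : M.S → ℝ → ℝ := fun s' t => M.V (M.softmaxPolicy (c t)) s' with hg
  have hgdiff : ∀ (s' : M.S) (t₀ : ℝ), DifferentiableAt ℝ (g s') t₀ := by
    intro s' t₀
    exact (V_softmax_diff M hM s' (c t₀)).comp t₀ (line_hasDerivAt M θ u t₀).differentiableAt
  set v' : M.S → ℝ := fun s' => deriv (g s') 0 with hv'
  have hgD : ∀ s', HasDerivAt (g s') (v' s') 0 := fun s' => (hgdiff s' 0).hasDerivAt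
  have hg0 : ∀ s', g s' 0 = M.V π₀ s' := by
    intro s'
    simp only [hg, hc0, hπ₀]
  have hπd : ∀ (s' : M.S) (a' : M.A),
      HasDerivAt (fun t => M.softmaxPolicy (c t) s' a') (dpi M θ s a s' a') 0 :=
    fun s' a' => softmax_line_hasDerivAt M θ s a s' a'
  have hrP : ∀ s' : M.S, HasDerivAt (fun t => M.rPol (M.softmaxPolicy (c t)) s')
      (∑ a', dpi M θ s a s' a' * M.r s' a') 0 := by
    intro s'
    unfold FinMDP.rPol
    exact HasDerivAt.fun_sum fun a' _ => (hπd s' a').mul_const _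
  have hPm : ∀ s' s'' : M.S, HasDerivAt (fun t => M.Pmat (M.softmaxPolicy (c t)) s' s'')
      (∑ a', dpi M θ s a s' a' * M.P s' a' s'') 0 := by
    intro s' s''
    have heq : (fun t => M.Pmat (M.softmaxPolicy (c t)) s' s'') =
        fun t => ∑ a', M.softmaxPolicy (c t) s' a' * M.P s' a' s'' := rfl
    rw [heq]
    exact HasDerivAt.fun_sum fun a' _ => (hπd s' a').mul_const _
  have hkey : ∀ s' : M.S, v' s' = (∑ a', dpi M θ s a s' a' * M.r s' a') +
      M.γ * ∑ s'', ((∑ a', dpi M θ s a s' a' * M.P s' a' s'') * M.V π₀ s''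
        + M.Pmat π₀ s' s'' * v' s'') := by
    intro s'
    have hRHS : HasDerivAt (fun t => M.rPol (M.softmaxPolicy (c t)) s' +
        M.γ * ∑ s'', M.Pmat (M.softmaxPolicy (c t)) s' s'' * g s'' t)
        ((∑ a', dpi M θ s a s' a' * M.r s' a') +
          M.γ * ∑ s'', ((∑ a', dpi M θ s a s' a' * M.P s' a' s'') * g s'' 0
            + M.Pmat (M.softmaxPolicy (c 0)) s' s'' * v' s'')) 0 :=
      (hrP s').add ((HasDerivAt.fun_sum fun s'' _ => (hPm s' s'').mul (hgD s'')).const_mul M.γ)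
    have hfun : (g s') = (fun t => M.rPol (M.softmaxPolicy (c t)) s' +
        M.γ * ∑ s'', M.Pmat (M.softmaxPolicy (c t)) s' s'' * g s'' t) := by
      funext t
      exact bellman (hnorm t) s'
    have hL : HasDerivAt (fun t => M.rPol (M.softmaxPolicy (c t)) s' +
        M.γ * ∑ s'', M.Pmat (M.softmaxPolicy (c t)) s' s'' * g s'' t) (v' s') 0 := by
      rw [← hfun]; exact hgD s'
    have := hL.unique hRHS
    rw [this]
    simp only [hg0, hc0, hπ₀]
  have hmv : (((1 : Matrix M.S M.S ℝ) - M.γ • M.Pmat π₀).mulVec v') =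
      fun s' => ∑ a', dpi M θ s a s' a' * M.Qf π₀ s' a' := by
    funext s'
    have hexp : (((1 : Matrix M.S M.S ℝ) - M.γ • M.Pmat π₀).mulVec v') s' =
        v' s' - M.γ * ∑ s'', M.Pmat π₀ s' s'' * v' s'' := by
      have hmve : (M.Pmat π₀).mulVec v' s' = ∑ s'', M.Pmat π₀ s' s'' * v' s'' := by
        simp [Matrix.mulVec, dotProduct]
      simp only [Matrix.sub_mulVec, Matrix.one_mulVec, Matrix.smul_mulVec,
        Pi.sub_apply, Pi.smul_apply, smul_eq_mul, hmve]
    rw [hexp, hkey s']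
    have hQ : ∑ a', dpi M θ s a s' a' * M.Qf π₀ s' a' =
        (∑ a', dpi M θ s a s' a' * M.r s' a') +
          M.γ * ∑ s'', (∑ a', dpi M θ s a s' a' * M.P s' a' s'') * M.V π₀ s'' := by
      simp only [FinMDP.Qf, mul_add, Finset.sum_add_distrib]
      congr 1
      simp only [Finset.mul_sum, Finset.sum_mul]
      rw [Finset.sum_comm]
      exact Finset.sum_congr rfl fun a' _ => Finset.sum_congr rfl fun s'' _ => by ring
    rw [hQ]
    simp only [mul_add, Finset.sum_add_distrib]
    ring
  have hv'eq : v' = (Minv M π₀).mulVec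
      (fun s' => ∑ a', dpi M θ s a s' a' * M.Qf π₀ s' a') := by
    rw [← hmv, Matrix.mulVec_mulVec, Minv_mul hnorm0, Matrix.one_mulVec]
  have hsum : HasDerivAt (fun t => M.Vd (M.softmaxPolicy (c t)) μ) (∑ s₀, μ s₀ * v' s₀) 0 := by
    unfold FinMDP.Vd
    exact HasDerivAt.fun_sum fun s₀ _ => (hgD s₀).const_mul (μ s₀)
  have h1 := (Vd_softmax_diff M hM μ θ).hasFDerivAt
  have h1' : HasFDerivAt (fun θ' : EuclideanSpace ℝ (M.S × M.A) => M.Vd (M.softmaxPolicy θ') μ)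
      (fderiv ℝ (fun θ' : EuclideanSpace ℝ (M.S × M.A) => M.Vd (M.softmaxPolicy θ') μ) θ)
      (c 0) := by rwa [hc0]
  have h2 := h1'.comp_hasDerivAt 0 (line_hasDerivAt M θ u 0)
  have h3 := h2.unique hsum
  rw [hv'eq] at h3
  exact h3

end Main
section Final

variable (M : FinMDP)

lemma b_closed [Nonempty M.A] (hM : M.Valid) (θ : EuclideanSpace ℝ (M.S × M.A))
    (s : M.S) (a : M.A) (s' : M.S) :
    ∑ a', dpi M θ s a s' a' * M.Qf (M.softmaxPolicy θ) s' a' =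
      if s' = s then M.softmaxPolicy θ s a * M.Adv (M.softmaxPolicy θ) s a else 0 := by
  set π₀ : M.S → M.A → ℝ := M.softmaxPolicy θ with hπ₀
  have hnorm0 : ‖M.γ • M.Pmat π₀‖ < 1 :=
    norm_lt M hM _ (softmax_nonneg M θ) (softmax_sum_le M θ)
  by_cases hs : s' = s
  · subst hs
    rw [if_pos rfl]
    have hstep : ∀ a' : M.A, dpi M θ s' a s' a' * M.Qf π₀ s' a' =
        (if a' = a then (1:ℝ) else 0) * (π₀ s' a' * M.Qf π₀ s' a')
          - π₀ s' a * (π₀ s' a' * M.Qf π₀ s' a') := by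
      intro a'
      unfold dpi
      rw [if_pos rfl]
      ring
    simp_rw [hstep]
    rw [Finset.sum_sub_distrib, ← Finset.mul_sum, V_eq_sum_Q hnorm0 s']
    have h1 : ∑ a', (if a' = a then (1:ℝ) else 0) * (π₀ s' a' * M.Qf π₀ s' a') =
        π₀ s' a * M.Qf π₀ s' a := by
      rw [Finset.sum_eq_single a]
      · rw [if_pos rfl, one_mul]
      · intro b _ hb; rw [if_neg hb, zero_mul]
      · intro h; exact absurd (Finset.mem_univ a) h
    rw [h1]
    unfold FinMDP.Adv
    ring
  · rw [if_neg hs]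
    apply Finset.sum_eq_zero
    intro a' _
    unfold dpi
    rw [if_neg hs, zero_mul]

lemma final_nonempty [Nonempty M.A] (hM : M.Valid) (μ : M.S → ℝ)
    (θ : EuclideanSpace ℝ (M.S × M.A)) (s : M.S) (a : M.A) :
    fderiv ℝ (fun θ' : EuclideanSpace ℝ (M.S × M.A) =>
        M.Vd (M.softmaxPolicy θ') μ) θ (EuclideanSpace.single (s, a) 1) =
      (1 / (1 - M.γ)) * M.dvisitD (M.softmaxPolicy θ) μ s *
        (M.softmaxPolicy θ s a * M.Adv (M.softmaxPolicy θ) s a) := by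
  rw [fderiv_dir_eq M hM μ θ s a]
  set π₀ : M.S → M.A → ℝ := M.softmaxPolicy θ with hπ₀
  have hnorm0 : ‖M.γ • M.Pmat π₀‖ < 1 :=
    norm_lt M hM _ (softmax_nonneg M θ) (softmax_sum_le M θ)
  have hmul : ∀ s₀ : M.S, (Minv M π₀).mulVec
      (fun s' => ∑ a', dpi M θ s a s' a' * M.Qf π₀ s' a') s₀ =
      Minv M π₀ s₀ s * (π₀ s a * M.Adv π₀ s a) := by
    intro s₀
    have : (Minv M π₀).mulVec
        (fun s' => ∑ a', dpi M θ s a s' a' * M.Qf π₀ s' a') s₀ =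
        ∑ s', Minv M π₀ s₀ s' * ∑ a', dpi M θ s a s' a' * M.Qf π₀ s' a' := by
      simp [Matrix.mulVec, dotProduct]
    rw [this]
    rw [Finset.sum_congr rfl (fun s' _ => by rw [b_closed M hM θ s a s'])]
    rw [Finset.sum_eq_single s]
    · rw [if_pos rfl]
    · intro b _ hb; rw [if_neg hb, mul_zero]
    · intro h; exact absurd (Finset.mem_univ s) h
  simp_rw [hmul]
  have hd : M.dvisitD π₀ μ s = (1 - M.γ) * ∑ s₀, μ s₀ * Minv M π₀ s₀ s := by
    unfold FinMDP.dvisitD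
    rw [Finset.mul_sum]
    exact Finset.sum_congr rfl fun s₀ _ => by rw [dvisit_eq hnorm0]; ring
  rw [hd]
  have hγ : (1 : ℝ) - M.γ ≠ 0 := by
    have := hM.2.2.2.2
    intro h
    rw [sub_eq_zero] at h
    exact absurd h.symm (ne_of_lt this)
  have hcanc : (1 / (1 - M.γ)) * ((1 - M.γ) * ∑ s₀, μ s₀ * Minv M π₀ s₀ s) =
      ∑ s₀, μ s₀ * Minv M π₀ s₀ s := by
    field_simp
  rw [hcanc, Finset.sum_mul]
  exact Finset.sum_congr rfl fun s₀ _ => by ring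

lemma Vd_empty [IsEmpty M.A] (π : M.S → M.A → ℝ) (μ : M.S → ℝ) : M.Vd π μ = 0 := by
  unfold FinMDP.Vd FinMDP.V
  have h : M.rPol π = 0 := funext fun s' => by simp [FinMDP.rPol]
  rw [h]
  simp

end Final

end PGaux

/-- **Policy gradient formula for the softmax parameterization.** -/
theorem softmax_policy_gradient_formula (M : FinMDP) (hM : M.Valid)
    (μ : M.S → ℝ) (hμ : IsDist μ) :
    Differentiable ℝ (fun θ : EuclideanSpace ℝ (M.S × M.A) =>
        M.Vd (M.softmaxPolicy θ) μ) ∧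
      ∀ (θ : EuclideanSpace ℝ (M.S × M.A)) (s : M.S) (a : M.A),
        fderiv ℝ (fun θ' : EuclideanSpace ℝ (M.S × M.A) =>
            M.Vd (M.softmaxPolicy θ') μ) θ (EuclideanSpace.single (s, a) 1) =
          (1 / (1 - M.γ)) * M.dvisitD (M.softmaxPolicy θ) μ s *
            (M.softmaxPolicy θ s a * M.Adv (M.softmaxPolicy θ) s a) := by
  cases isEmpty_or_nonempty M.A with
  | inl h =>
    constructor
    · have heq : (fun θ : EuclideanSpace ℝ (M.S × M.A) => M.Vd (M.softmaxPolicy θ) μ) =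
          fun _ => (0 : ℝ) := funext fun θ => PGaux.Vd_empty M _ μ
      rw [heq]
      exact differentiable_const 0
    · intro θ s a
      exact (IsEmpty.false a).elim
  | inr h =>
    exact ⟨PGaux.Vd_softmax_diff M hM μ, fun θ s a => PGaux.final_nonempty M hM μ θ s a⟩
end

section
/- (Smoothness of the log-barrier regularized objective) For every finite discounted MDP, state distribution μ, and λ ≥ 0, the log-barrier regularized objective L_λ(θ) = V^{π_θ}(μ) + (λ/(|S||A|)) Σ_{s,a} log π_θ(a|s) on ℝ^{S×A} has β_λ-Lipschitz gradient: ‖∇_θ L_λ(θ) − ∇_θ L_λ(θ′)‖₂ ≤ β_λ ‖θ − θ′‖₂ for all θ, θ′ ∈ ℝ^{S×A}, where β_λ = 8/(1−γ)³ + 2λ/|S|. In particular (λ = 0), θ ↦ V^{π_θ}(μ) has 8/(1−γ)³-Lipschitz gradient. -/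
open scoped BigOperators InnerProductSpace

section MatAux
open scoped NNReal
variable {S : Type} [Fintype S] [DecidableEq S]

attribute [local instance] Matrix.linftyOpNormedAddCommGroup Matrix.linftyOpNormedRing
  Matrix.linftyOpNormedAlgebra

local instance : CompleteSpace (Matrix S S ℝ) :=
  FiniteDimensional.complete ℝ _

noncomputable def entryCLM (s s' : S) : Matrix S S ℝ →L[ℝ] ℝ :=
  LinearMap.toContinuousLinearMap ⟨⟨fun A => A s s', fun _ _ => rfl⟩, fun _ _ => rfl⟩

@[simp] lemma entryCLM_apply (s s' : S) (A : Matrix S S ℝ) : entryCLM s s' A = A s s' := rfl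

lemma linfty_norm_le_of_rows {A : Matrix S S ℝ} {C : ℝ} (hC : 0 ≤ C)
    (h : ∀ i, ∑ j, |A i j| ≤ C) : ‖A‖ ≤ C := by
  rw [Matrix.linfty_opNorm_def]
  rw [show C = ((C.toNNReal : ℝ≥0) : ℝ) by simp [hC]]
  rw [NNReal.coe_le_coe]
  refine Finset.sup_le fun i _ => ?_
  rw [← NNReal.coe_le_coe]
  push_cast
  simpa [Real.norm_eq_abs, Real.coe_toNNReal _ hC] using h i

lemma rows_le_linfty_norm (A : Matrix S S ℝ) (i : S) : ∑ j, |A i j| ≤ ‖A‖ := by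
  rw [Matrix.linfty_opNorm_def]
  have : (∑ j, ‖A i j‖₊ : ℝ≥0) ≤ (Finset.univ : Finset S).sup fun i => ∑ j, ‖A i j‖₊ :=
    Finset.le_sup (f := fun i => ∑ j, ‖A i j‖₊) (Finset.mem_univ i)
  calc ∑ j, |A i j| = ((∑ j, ‖A i j‖₊ : ℝ≥0) : ℝ) := by
        push_cast; simp [Real.norm_eq_abs]
    _ ≤ _ := NNReal.coe_le_coe.mpr this

lemma abs_entry_le_linfty_norm (A : Matrix S S ℝ) (i j : S) : |A i j| ≤ ‖A‖ :=
  le_trans (Finset.single_le_sum (f := fun j => |A i j|) (fun _ _ => abs_nonneg _)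
    (Finset.mem_univ j)) (rows_le_linfty_norm A i)

end MatAux

namespace LBAux

variable (M : FinMDP)

/-- The normalization factor of the softmax policy. -/
noncomputable def Zf (θ : EuclideanSpace ℝ (M.S × M.A)) (s : M.S) : ℝ :=
  ∑ a', Real.exp (θ (s, a'))

lemma sm_eq (θ : EuclideanSpace ℝ (M.S × M.A)) (s : M.S) (a : M.A) :
    M.softmaxPolicy θ s a = Real.exp (θ (s, a)) / Zf M θ s := rfl

lemma Zf_pos [Nonempty M.A] (θ : EuclideanSpace ℝ (M.S × M.A)) (s : M.S) : 0 < Zf M θ s :=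
  Finset.sum_pos (fun _ _ => Real.exp_pos _) Finset.univ_nonempty

lemma sm_pos [Nonempty M.A] (θ : EuclideanSpace ℝ (M.S × M.A)) (s : M.S) (a : M.A) :
    0 < M.softmaxPolicy θ s a :=
  div_pos (Real.exp_pos _) (Zf_pos M θ s)

lemma sm_sum [Nonempty M.A] (θ : EuclideanSpace ℝ (M.S × M.A)) (s : M.S) :
    ∑ a, M.softmaxPolicy θ s a = 1 := by
  rw [show (∑ a, M.softmaxPolicy θ s a) = (∑ a, Real.exp (θ (s, a))) / Zf M θ s by
    rw [Finset.sum_div]; rfl]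
  exact div_self (ne_of_gt (Zf_pos M θ s))

lemma sm_le_one [Nonempty M.A] (θ : EuclideanSpace ℝ (M.S × M.A)) (s : M.S) (a : M.A) :
    M.softmaxPolicy θ s a ≤ 1 := by
  rw [sm_eq, div_le_one (Zf_pos M θ s)]
  exact Finset.single_le_sum (f := fun a' => Real.exp (θ (s, a')))
    (fun _ _ => (Real.exp_pos _).le) (Finset.mem_univ a)

lemma sm_isPolicy [Nonempty M.A] (θ : EuclideanSpace ℝ (M.S × M.A)) :
    M.IsPolicy (M.softmaxPolicy θ) :=
  ⟨fun s a => (sm_pos M θ s a).le, fun s => sm_sum M θ s⟩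

/-- mean of `v (s, ·)` under the softmax policy at state `s`. -/
noncomputable def mbar (θ v : EuclideanSpace ℝ (M.S × M.A)) (s : M.S) : ℝ :=
  ∑ a, M.softmaxPolicy θ s a * v (s, a)

/-- mean of `v (s, ·)^2` under the softmax policy at state `s`. -/
noncomputable def m2 (θ v : EuclideanSpace ℝ (M.S × M.A)) (s : M.S) : ℝ :=
  ∑ a, M.softmaxPolicy θ s a * v (s, a) ^ 2

/-- first directional derivative of the softmax policy. -/
noncomputable def qd1 (θ v : EuclideanSpace ℝ (M.S × M.A)) (s : M.S) (a : M.A) : ℝ :=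
  M.softmaxPolicy θ s a * (v (s, a) - mbar M θ v s)

/-- second directional derivative of the softmax policy. -/
noncomputable def qd2 (θ v : EuclideanSpace ℝ (M.S × M.A)) (s : M.S) (a : M.A) : ℝ :=
  M.softmaxPolicy θ s a * (v (s, a) - mbar M θ v s) ^ 2
    - M.softmaxPolicy θ s a * (m2 M θ v s - (mbar M θ v s) ^ 2)

variable {x v : EuclideanSpace ℝ (M.S × M.A)}

lemma line_apply (x v : EuclideanSpace ℝ (M.S × M.A)) (t : ℝ) (p : M.S × M.A) :
    (x + t • v) p = x p + t * v p := rfl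

lemma hasDerivAt_coord (x v : EuclideanSpace ℝ (M.S × M.A)) (t : ℝ) (p : M.S × M.A) :
    HasDerivAt (fun t : ℝ => (x + t • v) p) (v p) t := by
  simp only [line_apply]
  simpa using ((hasDerivAt_id t).mul_const (v p)).const_add (x p)

lemma hasDerivAt_sm [Nonempty M.A] (t : ℝ) (s : M.S) (a : M.A) :
    HasDerivAt (fun t : ℝ => M.softmaxPolicy (x + t • v) s a) (qd1 M (x + t • v) v s a) t := by
  have he : ∀ b : M.A, HasDerivAt (fun t : ℝ => Real.exp ((x + t • v) (s, b)))
      (Real.exp ((x + t • v) (s, b)) * v (s, b)) t := fun b =>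
    (hasDerivAt_coord M x v t (s, b)).exp
  have hZ : HasDerivAt (fun t : ℝ => Zf M (x + t • v) s)
      (∑ b, Real.exp ((x + t • v) (s, b)) * v (s, b)) t :=
    HasDerivAt.fun_sum (fun b _ => he b)
  have h := (he a).fun_div hZ (ne_of_gt (Zf_pos M _ s))
  refine h.congr_deriv ?_
  have hzne := ne_of_gt (Zf_pos M (x + t • v) s)
  rw [qd1, sm_eq, mbar]
  rw [show (∑ b, M.softmaxPolicy (x + t • v) s b * v (s, b))
      = (∑ b, Real.exp ((x + t • v) (s, b)) * v (s, b)) / Zf M (x + t • v) s by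
    rw [Finset.sum_div]
    exact Finset.sum_congr rfl fun b _ => by rw [sm_eq]; ring]
  field_simp

end LBAux
namespace LBAux

variable (M : FinMDP) {x v : EuclideanSpace ℝ (M.S × M.A)}

lemma hasDerivAt_mbar [Nonempty M.A] (x v : EuclideanSpace ℝ (M.S × M.A)) (t : ℝ) (s : M.S) :
    HasDerivAt (fun t : ℝ => mbar M (x + t • v) v s)
      (m2 M (x + t • v) v s - (mbar M (x + t • v) v s) ^ 2) t := by
  have h : HasDerivAt (fun t : ℝ => mbar M (x + t • v) v s)
      (∑ b, qd1 M (x + t • v) v s b * v (s, b)) t :=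
    HasDerivAt.fun_sum (fun b _ => (hasDerivAt_sm M t s b).mul_const (v (s, b)))
  convert h using 1
  simp only [qd1]
  rw [show (∑ b, M.softmaxPolicy (x + t • v) s b * (v (s, b) - mbar M (x + t • v) v s) * v (s, b))
      = (∑ b, M.softmaxPolicy (x + t • v) s b * v (s, b) ^ 2)
        - (∑ b, M.softmaxPolicy (x + t • v) s b * v (s, b)) * mbar M (x + t • v) v s by
    rw [Finset.sum_mul, ← Finset.sum_sub_distrib]
    exact Finset.sum_congr rfl fun b _ => by ring]
  rw [show (∑ b, M.softmaxPolicy (x + t • v) s b * v (s, b) ^ 2) = m2 M (x + t • v) v s from rfl,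
    show (∑ b, M.softmaxPolicy (x + t • v) s b * v (s, b)) = mbar M (x + t • v) v s from rfl]
  ring

lemma hasDerivAt_qd1 [Nonempty M.A] (x v : EuclideanSpace ℝ (M.S × M.A)) (t : ℝ) (s : M.S) (a : M.A) :
    HasDerivAt (fun t : ℝ => qd1 M (x + t • v) v s a) (qd2 M (x + t • v) v s a) t := by
  have h := (hasDerivAt_sm (x := x) (v := v) M t s a).mul
    ((hasDerivAt_const t (v (s, a))).sub (hasDerivAt_mbar M x v t s))
  simp only [Pi.mul_def, Pi.sub_def] at h
  refine h.congr_deriv ?_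
  simp only [qd2, qd1]
  ring

lemma hasDerivAt_logsm [Nonempty M.A] (x v : EuclideanSpace ℝ (M.S × M.A)) (t : ℝ) (s : M.S) (a : M.A) :
    HasDerivAt (fun t : ℝ => Real.log (M.softmaxPolicy (x + t • v) s a))
      (v (s, a) - mbar M (x + t • v) v s) t := by
  have h := (hasDerivAt_sm (x := x) (v := v) M t s a).log (ne_of_gt (sm_pos M _ s a))
  convert h using 1
  rw [qd1, mul_comm, mul_div_assoc, div_self (ne_of_gt (sm_pos M _ s a)), mul_one]

/-! ### bounds -/

lemma norm_sq_eq (v : EuclideanSpace ℝ (M.S × M.A)) : ‖v‖ ^ 2 = ∑ p, v p ^ 2 := by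
  rw [EuclideanSpace.norm_eq, Real.sq_sqrt (by positivity)]
  exact Finset.sum_congr rfl fun p _ => by rw [Real.norm_eq_abs, sq_abs]

lemma coordsq_le (v : EuclideanSpace ℝ (M.S × M.A)) (s : M.S) :
    ∑ a, v (s, a) ^ 2 ≤ ‖v‖ ^ 2 := by
  rw [norm_sq_eq, Fintype.sum_prod_type]
  exact Finset.single_le_sum (f := fun s => ∑ a, v (s, a) ^ 2)
    (fun _ _ => Finset.sum_nonneg fun _ _ => sq_nonneg _) (Finset.mem_univ s)

lemma coord_le (v : EuclideanSpace ℝ (M.S × M.A)) (p : M.S × M.A) : |v p| ≤ ‖v‖ := by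
  have h : v p ^ 2 ≤ ‖v‖ ^ 2 := by
    rw [norm_sq_eq]
    exact Finset.single_le_sum (f := fun p => v p ^ 2) (fun _ _ => sq_nonneg _) (Finset.mem_univ p)
  rw [← Real.sqrt_sq_eq_abs, ← Real.sqrt_sq (norm_nonneg v)]
  exact Real.sqrt_le_sqrt h

variable [Nonempty M.A]

lemma mbar_abs_le (θ v : EuclideanSpace ℝ (M.S × M.A)) (s : M.S) : |mbar M θ v s| ≤ ‖v‖ := by
  rw [mbar]
  refine le_trans (Finset.abs_sum_le_sum_abs _ _) ?_
  rw [show ‖v‖ = ∑ a : M.A, M.softmaxPolicy θ s a * ‖v‖ by rw [← Finset.sum_mul, sm_sum, one_mul]]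
  refine Finset.sum_le_sum fun a _ => ?_
  rw [abs_mul, abs_of_pos (sm_pos M θ s a)]
  exact mul_le_mul_of_nonneg_left (le_trans (by exact le_rfl) (coord_le M v (s, a)))
    (sm_pos M θ s a).le

lemma qd1_abs_sum_le (θ v : EuclideanSpace ℝ (M.S × M.A)) (s : M.S) :
    ∑ a, |qd1 M θ v s a| ≤ 2 * ‖v‖ := by
  have : ∀ a : M.A, |qd1 M θ v s a| ≤ M.softmaxPolicy θ s a * (2 * ‖v‖) := by
    intro a
    rw [qd1, abs_mul, abs_of_pos (sm_pos M θ s a)]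
    refine mul_le_mul_of_nonneg_left ?_ (sm_pos M θ s a).le
    refine le_trans (abs_sub _ _) ?_
    have := coord_le M v (s, a); have := mbar_abs_le M θ v s
    linarith
  refine le_trans (Finset.sum_le_sum fun a _ => this a) ?_
  rw [← Finset.sum_mul, sm_sum, one_mul]

lemma mbar_sq_le_m2 (θ v : EuclideanSpace ℝ (M.S × M.A)) (s : M.S) :
    (mbar M θ v s) ^ 2 ≤ m2 M θ v s := by
  have h := Finset.sum_mul_sq_le_sq_mul_sq Finset.univ
    (fun a => Real.sqrt (M.softmaxPolicy θ s a))
    (fun a => Real.sqrt (M.softmaxPolicy θ s a) * v (s, a))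
  have e1 : ∀ a : M.A, Real.sqrt (M.softmaxPolicy θ s a)
      * (Real.sqrt (M.softmaxPolicy θ s a) * v (s, a)) = M.softmaxPolicy θ s a * v (s, a) := by
    intro a
    rw [← mul_assoc, Real.mul_self_sqrt (sm_pos M θ s a).le]
  have e2 : ∀ a : M.A, Real.sqrt (M.softmaxPolicy θ s a) ^ 2 = M.softmaxPolicy θ s a := fun a =>
    Real.sq_sqrt (sm_pos M θ s a).le
  have e3 : ∀ a : M.A, (Real.sqrt (M.softmaxPolicy θ s a) * v (s, a)) ^ 2
      = M.softmaxPolicy θ s a * v (s, a) ^ 2 := by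
    intro a
    rw [mul_pow, e2]
  rw [Finset.sum_congr rfl fun a _ => e1 a, Finset.sum_congr rfl fun a _ => e2 a,
    Finset.sum_congr rfl fun a _ => e3 a, sm_sum, one_mul] at h
  exact h

lemma m2_le (θ v : EuclideanSpace ℝ (M.S × M.A)) (s : M.S) :
    m2 M θ v s ≤ ∑ a, v (s, a) ^ 2 := by
  rw [m2]
  exact Finset.sum_le_sum fun a _ => by
    nlinarith [sm_pos M θ s a, sm_le_one M θ s a, sq_nonneg (v (s, a))]

lemma var_nonneg (θ v : EuclideanSpace ℝ (M.S × M.A)) (s : M.S) :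
    0 ≤ m2 M θ v s - (mbar M θ v s) ^ 2 :=
  sub_nonneg.mpr (mbar_sq_le_m2 M θ v s)

lemma sum_sm_sub_sq (θ v : EuclideanSpace ℝ (M.S × M.A)) (s : M.S) :
    ∑ a, M.softmaxPolicy θ s a * (v (s, a) - mbar M θ v s) ^ 2
      = m2 M θ v s - (mbar M θ v s) ^ 2 := by
  have : ∀ a : M.A, M.softmaxPolicy θ s a * (v (s, a) - mbar M θ v s) ^ 2
      = M.softmaxPolicy θ s a * v (s, a) ^ 2
        - 2 * (M.softmaxPolicy θ s a * v (s, a)) * mbar M θ v s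
        + M.softmaxPolicy θ s a * (mbar M θ v s) ^ 2 := fun a => by ring
  rw [Finset.sum_congr rfl fun a _ => this a]
  rw [Finset.sum_add_distrib, Finset.sum_sub_distrib, ← Finset.sum_mul, ← Finset.sum_mul,
    ← Finset.mul_sum]
  rw [← m2]
  rw [show (∑ a, M.softmaxPolicy θ s a * v (s, a)) = mbar M θ v s from rfl]
  rw [show (∑ a, M.softmaxPolicy θ s a) = 1 from sm_sum M θ s]
  ring

lemma qd2_abs_sum_le (θ v : EuclideanSpace ℝ (M.S × M.A)) (s : M.S) :
    ∑ a, |qd2 M θ v s a| ≤ 2 * ∑ a, v (s, a) ^ 2 := by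
  have hv := var_nonneg M θ v s
  have h1 : ∀ a : M.A, |qd2 M θ v s a| ≤ M.softmaxPolicy θ s a * (v (s, a) - mbar M θ v s) ^ 2
      + M.softmaxPolicy θ s a * (m2 M θ v s - (mbar M θ v s) ^ 2) := by
    intro a
    rw [qd2]
    refine le_trans (abs_sub _ _) ?_
    have h2 := sm_pos M θ s a
    rw [abs_of_nonneg (by positivity), abs_of_nonneg (mul_nonneg h2.le hv)]
  refine le_trans (Finset.sum_le_sum fun a _ => h1 a) ?_
  rw [Finset.sum_add_distrib, sum_sm_sub_sq, ← Finset.sum_mul, sm_sum, one_mul]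
  have := m2_le M θ v s
  have h3 : (mbar M θ v s) ^ 2 ≥ 0 := sq_nonneg _
  linarith

end LBAux
namespace LBAux

section Mat

attribute [local instance] Matrix.linftyOpNormedAddCommGroup Matrix.linftyOpNormedRing
  Matrix.linftyOpNormedAlgebra

local instance matComplete (S : Type) [Fintype S] [DecidableEq S] :
    CompleteSpace (Matrix S S ℝ) :=
  FiniteDimensional.complete ℝ _

variable (M : FinMDP)

/-- Basis matrix: row `s` is `M.P s a ·`, all other rows zero. -/
noncomputable def bmat (s : M.S) (a : M.A) : Matrix M.S M.S ℝ :=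
  Matrix.of fun s' s'' => if s' = s then M.P s a s'' else 0

/-- Linear combination of the basis matrices with coefficients `c`. -/
noncomputable def comb (c : M.S → M.A → ℝ) : Matrix M.S M.S ℝ :=
  ∑ p : M.S × M.A, c p.1 p.2 • bmat M p.1 p.2

lemma comb_apply (c : M.S → M.A → ℝ) (s' s'' : M.S) :
    comb M c s' s'' = ∑ a, c s' a * M.P s' a s'' := by
  rw [comb, Matrix.sum_apply, Fintype.sum_prod_type]
  have h : ∀ s : M.S, (∑ a : M.A, (c (s, a).1 (s, a).2 • bmat M (s, a).1 (s, a).2) s' s'')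
      = if s' = s then ∑ a, c s a * M.P s a s'' else 0 := by
    intro s
    by_cases h : s' = s
    · subst h; simp [bmat, Matrix.smul_apply]
    · simp [bmat, Matrix.smul_apply, h]
  rw [Finset.sum_congr rfl fun s _ => h s]
  simp

lemma Pmat_sm_eq (θ : EuclideanSpace ℝ (M.S × M.A)) :
    M.Pmat (M.softmaxPolicy θ) = comb M (fun s a => M.softmaxPolicy θ s a) := by
  ext s' s''
  rw [comb_apply]
  rfl

noncomputable def Wm (θ : EuclideanSpace ℝ (M.S × M.A)) : Matrix M.S M.S ℝ :=
  1 - M.γ • M.Pmat (M.softmaxPolicy θ)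

noncomputable def CI (θ : EuclideanSpace ℝ (M.S × M.A)) : Matrix M.S M.S ℝ :=
  Ring.inverse (Wm M θ)

noncomputable def P1 (θ v : EuclideanSpace ℝ (M.S × M.A)) : Matrix M.S M.S ℝ :=
  comb M (qd1 M θ v)

noncomputable def P2 (θ v : EuclideanSpace ℝ (M.S × M.A)) : Matrix M.S M.S ℝ :=
  comb M (qd2 M θ v)

noncomputable def C1 (θ v : EuclideanSpace ℝ (M.S × M.A)) : Matrix M.S M.S ℝ :=
  M.γ • (CI M θ * P1 M θ v * CI M θ)

noncomputable def C2 (θ v : EuclideanSpace ℝ (M.S × M.A)) : Matrix M.S M.S ℝ :=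
  M.γ • (C1 M θ v * P1 M θ v * CI M θ + CI M θ * P2 M θ v * CI M θ
    + CI M θ * P1 M θ v * C1 M θ v)

variable {M}

lemma comb_norm_le (hM : M.Valid) {c : M.S → M.A → ℝ} {B : ℝ} (hB : 0 ≤ B)
    (hc : ∀ s, ∑ a, |c s a| ≤ B) : ‖comb M c‖ ≤ B := by
  refine linfty_norm_le_of_rows hB fun s' => ?_
  calc ∑ s'', |comb M c s' s''| ≤ ∑ s'', ∑ a, |c s' a| * M.P s' a s'' := by
        refine Finset.sum_le_sum fun s'' _ => ?_
        rw [comb_apply]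
        refine le_trans (Finset.abs_sum_le_sum_abs _ _) (Finset.sum_le_sum fun a _ => ?_)
        rw [abs_mul, abs_of_nonneg (hM.1 s' a s'')]
    _ = ∑ a, |c s' a| * ∑ s'', M.P s' a s'' := by
        rw [Finset.sum_comm]
        exact Finset.sum_congr rfl fun a _ => by rw [Finset.mul_sum]
    _ = ∑ a, |c s' a| := by
        exact Finset.sum_congr rfl fun a _ => by rw [hM.2.1 s' a, mul_one]
    _ ≤ B := hc s'

lemma Pmat_norm_le (hM : M.Valid) [Nonempty M.A] (θ : EuclideanSpace ℝ (M.S × M.A)) :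
    ‖M.Pmat (M.softmaxPolicy θ)‖ ≤ 1 := by
  rw [Pmat_sm_eq]
  refine comb_norm_le hM zero_le_one fun s => ?_
  rw [Finset.sum_congr rfl fun a _ => abs_of_pos (sm_pos M θ s a)]
  exact le_of_eq (sm_sum M θ s)

lemma gPm_norm_lt (hM : M.Valid) [Nonempty M.A] (θ : EuclideanSpace ℝ (M.S × M.A)) :
    ‖M.γ • M.Pmat (M.softmaxPolicy θ)‖ < 1 := by
  rw [norm_smul, Real.norm_eq_abs, abs_of_nonneg hM.2.2.2.1]
  calc M.γ * ‖M.Pmat (M.softmaxPolicy θ)‖ ≤ M.γ * 1 :=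
        mul_le_mul_of_nonneg_left (Pmat_norm_le hM θ) hM.2.2.2.1
    _ < 1 := by rw [mul_one]; exact hM.2.2.2.2

/-- The matrix `I - γ P_θ` as a unit. -/
noncomputable def uW (hM : M.Valid) [Nonempty M.A] (θ : EuclideanSpace ℝ (M.S × M.A)) :
    (Matrix M.S M.S ℝ)ˣ :=
  Units.oneSub (M.γ • M.Pmat (M.softmaxPolicy θ)) (gPm_norm_lt hM θ)

lemma CI_eq_inv_unit (hM : M.Valid) [Nonempty M.A] (θ : EuclideanSpace ℝ (M.S × M.A)) :
    CI M θ = ↑(uW hM θ)⁻¹ := by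
  show Ring.inverse (Wm M θ) = _
  exact Ring.inverse_unit (uW hM θ)

lemma isUnit_Wm (hM : M.Valid) [Nonempty M.A] (θ : EuclideanSpace ℝ (M.S × M.A)) :
    IsUnit (Wm M θ) := ⟨uW hM θ, rfl⟩

lemma CI_norm_le (hM : M.Valid) [Nonempty M.A] [Nonempty M.S]
    (θ : EuclideanSpace ℝ (M.S × M.A)) : ‖CI M θ‖ ≤ (1 - M.γ)⁻¹ := by
  have hx := gPm_norm_lt hM θ
  have h1 : CI M θ = ∑' n : ℕ, (M.γ • M.Pmat (M.softmaxPolicy θ)) ^ n :=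
    (geom_series_eq_inverse _ hx).symm
  rw [h1]
  refine tsum_of_norm_bounded (hasSum_geometric_of_lt_one hM.2.2.2.1 hM.2.2.2.2) fun n => ?_
  calc ‖(M.γ • M.Pmat (M.softmaxPolicy θ)) ^ n‖
      ≤ ‖M.γ • M.Pmat (M.softmaxPolicy θ)‖ ^ n := norm_pow_le _ n
    _ ≤ M.γ ^ n := by
        refine pow_le_pow_left₀ (norm_nonneg _) ?_ n
        rw [norm_smul, Real.norm_eq_abs, abs_of_nonneg hM.2.2.2.1]
        calc M.γ * ‖M.Pmat (M.softmaxPolicy θ)‖ ≤ M.γ * 1 :=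
              mul_le_mul_of_nonneg_left (Pmat_norm_le hM θ) hM.2.2.2.1
          _ = M.γ := mul_one _

end Mat

end LBAux
namespace LBAux

section Mat2

attribute [local instance] Matrix.linftyOpNormedAddCommGroup Matrix.linftyOpNormedRing
  Matrix.linftyOpNormedAlgebra

local instance (S : Type) [Fintype S] [DecidableEq S] : CompleteSpace (Matrix S S ℝ) :=
  FiniteDimensional.complete ℝ _

variable {M : FinMDP} (x v : EuclideanSpace ℝ (M.S × M.A))

lemma hasDerivAt_comb [Nonempty M.A] {c : EuclideanSpace ℝ (M.S × M.A) → M.S → M.A → ℝ}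
    {c' : M.S → M.A → ℝ} {t : ℝ}
    (h : ∀ s a, HasDerivAt (fun u : ℝ => c (x + u • v) s a) (c' s a) t) :
    HasDerivAt (fun u : ℝ => comb M (c (x + u • v))) (comb M c') t :=
  HasDerivAt.fun_sum (fun p _ => (h p.1 p.2).smul_const (bmat M p.1 p.2))

lemma hasDerivAt_Pm [Nonempty M.A] (t : ℝ) :
    HasDerivAt (fun u : ℝ => M.Pmat (M.softmaxPolicy (x + u • v)))
      (P1 M (x + t • v) v) t := by
  have h := hasDerivAt_comb x v (c := fun θ => M.softmaxPolicy θ)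
    (c' := qd1 M (x + t • v) v) (t := t) (fun s a => hasDerivAt_sm M t s a)
  refine HasDerivAt.congr_of_eventuallyEq h ?_
  filter_upwards with u
  rw [Pmat_sm_eq]

lemma hasDerivAt_P1 [Nonempty M.A] (t : ℝ) :
    HasDerivAt (fun u : ℝ => P1 M (x + u • v) v) (P2 M (x + t • v) v) t :=
  hasDerivAt_comb x v (c := fun θ => qd1 M θ v) (c' := qd2 M (x + t • v) v) (t := t)
    (fun s a => hasDerivAt_qd1 M x v t s a)

lemma hasDerivAt_Wm [Nonempty M.A] (t : ℝ) :
    HasDerivAt (fun u : ℝ => Wm M (x + u • v)) (-(M.γ • P1 M (x + t • v) v)) t := by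
  have h := ((hasDerivAt_Pm x v t).const_smul M.γ).const_sub (1 : Matrix M.S M.S ℝ)
  exact h

lemma hasDerivAt_CI (hM : M.Valid) [Nonempty M.A] (t : ℝ) :
    HasDerivAt (fun u : ℝ => CI M (x + u • v)) (C1 M (x + t • v) v) t := by
  have h := (hasFDerivAt_ringInverse (𝕜 := ℝ) (uW hM (x + t • v))).comp_hasDerivAt t
    (hasDerivAt_Wm x v t)
  have h2 : HasDerivAt (fun u : ℝ => CI M (x + u • v))
      ((-ContinuousLinearMap.mulLeftRight ℝ _ (↑(uW hM (x + t • v))⁻¹) (↑(uW hM (x + t • v))⁻¹))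
        (-(M.γ • P1 M (x + t • v) v))) t := h
  convert h2 using 1
  rw [ContinuousLinearMap.neg_apply, ContinuousLinearMap.mulLeftRight_apply,
    ← CI_eq_inv_unit hM, C1]
  simp [mul_neg, neg_mul, neg_neg, Matrix.mul_smul, Matrix.smul_mul]

lemma hasDerivAt_C1 (hM : M.Valid) [Nonempty M.A] (t : ℝ) :
    HasDerivAt (fun u : ℝ => C1 M (x + u • v) v) (C2 M (x + t • v) v) t := by
  have h := (((hasDerivAt_CI x v hM t).mul (hasDerivAt_P1 x v t)).mul
    (hasDerivAt_CI x v hM t)).const_smul M.γ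
  simp only [Pi.mul_def, Pi.smul_def] at h
  refine h.congr_deriv ?_
  rw [C2]
  congr 1
  rw [add_mul]

/-! ### the reward vector and its derivatives -/

variable (M) in
noncomputable def rv (θ : EuclideanSpace ℝ (M.S × M.A)) (s : M.S) : ℝ :=
  M.rPol (M.softmaxPolicy θ) s

variable (M) in
noncomputable def r1 (θ v : EuclideanSpace ℝ (M.S × M.A)) (s : M.S) : ℝ :=
  ∑ a, qd1 M θ v s a * M.r s a

variable (M) in
noncomputable def r2 (θ v : EuclideanSpace ℝ (M.S × M.A)) (s : M.S) : ℝ :=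
  ∑ a, qd2 M θ v s a * M.r s a

lemma hasDerivAt_rv [Nonempty M.A] (t : ℝ) (s : M.S) :
    HasDerivAt (fun u : ℝ => rv M (x + u • v) s) (r1 M (x + t • v) v s) t :=
  HasDerivAt.fun_sum (fun a _ => (hasDerivAt_sm M t s a).mul_const (M.r s a))

lemma hasDerivAt_r1 [Nonempty M.A] (t : ℝ) (s : M.S) :
    HasDerivAt (fun u : ℝ => r1 M (x + u • v) v s) (r2 M (x + t • v) v s) t :=
  HasDerivAt.fun_sum (fun a _ => (hasDerivAt_qd1 M x v t s a).mul_const (M.r s a))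

lemma rv_nonneg (hM : M.Valid) [Nonempty M.A] (θ : EuclideanSpace ℝ (M.S × M.A)) (s : M.S) :
    0 ≤ rv M θ s :=
  Finset.sum_nonneg fun a _ => mul_nonneg (sm_pos M θ s a).le (hM.2.2.1 s a).1

lemma rv_le_one (hM : M.Valid) [Nonempty M.A] (θ : EuclideanSpace ℝ (M.S × M.A)) (s : M.S) :
    rv M θ s ≤ 1 := by
  calc rv M θ s ≤ ∑ a, M.softmaxPolicy θ s a := Finset.sum_le_sum fun a _ => by
        nlinarith [sm_pos M θ s a, (hM.2.2.1 s a).1, (hM.2.2.1 s a).2]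
    _ = 1 := sm_sum M θ s

lemma abs_rv_le (hM : M.Valid) [Nonempty M.A] (θ : EuclideanSpace ℝ (M.S × M.A)) (s : M.S) :
    |rv M θ s| ≤ 1 := by
  rw [abs_of_nonneg (rv_nonneg hM θ s)]; exact rv_le_one hM θ s

lemma abs_r1_le (hM : M.Valid) [Nonempty M.A] (θ v : EuclideanSpace ℝ (M.S × M.A)) (s : M.S) :
    |r1 M θ v s| ≤ 2 * ‖v‖ := by
  refine le_trans (Finset.abs_sum_le_sum_abs _ _) (le_trans (Finset.sum_le_sum
    (fun a _ => ?_)) (qd1_abs_sum_le M θ v s))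
  rw [abs_mul]
  nlinarith [abs_nonneg (qd1 M θ v s a), (hM.2.2.1 s a).1, (hM.2.2.1 s a).2,
    abs_of_nonneg (hM.2.2.1 s a).1]

lemma abs_r2_le (hM : M.Valid) [Nonempty M.A] (θ v : EuclideanSpace ℝ (M.S × M.A)) (s : M.S) :
    |r2 M θ v s| ≤ 2 * ‖v‖ ^ 2 := by
  have h1 : |r2 M θ v s| ≤ ∑ a, |qd2 M θ v s a| := by
    refine le_trans (Finset.abs_sum_le_sum_abs _ _) (Finset.sum_le_sum fun a _ => ?_)
    rw [abs_mul]
    nlinarith [abs_nonneg (qd2 M θ v s a), (hM.2.2.1 s a).1, (hM.2.2.1 s a).2,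
      abs_of_nonneg (hM.2.2.1 s a).1]
  refine le_trans h1 (le_trans (qd2_abs_sum_le M θ v s) ?_)
  have := coordsq_le M v s
  linarith

/-! ### value identity -/

lemma V_eq (hM : M.Valid) [Nonempty M.A] (θ : EuclideanSpace ℝ (M.S × M.A)) (s : M.S) :
    M.V (M.softmaxPolicy θ) s = ∑ s', CI M θ s s' * rv M θ s' := by
  set Xm := M.γ • M.Pmat (M.softmaxPolicy θ) with hXm
  have hx : ‖Xm‖ < 1 := gPm_norm_lt hM θ
  have h1 : HasSum (fun n : ℕ => Xm ^ n) (Ring.inverse (1 - Xm)) :=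
    hasSum_geom_series_inverse Xm hx
  have h2 : ∀ s s' : M.S, HasSum (fun n : ℕ => (Xm ^ n) s s') (CI M θ s s') := by
    intro s s'
    have := h1.mapL (entryCLM s s')
    simpa [CI, Wm] using this
  have h3 : ∀ (n : ℕ) (s s' : M.S), (Xm ^ n) s s' = M.γ ^ n * (M.Pmat (M.softmaxPolicy θ) ^ n) s s' := by
    intro n s s'
    rw [hXm, smul_pow]
    simp [Matrix.smul_apply]
  calc M.V (M.softmaxPolicy θ) s
      = ∑' n : ℕ, ∑ s', (Xm ^ n) s s' * rv M θ s' := by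
        refine tsum_congr fun n => ?_
        rw [show ((M.Pmat (M.softmaxPolicy θ) ^ n).mulVec (M.rPol (M.softmaxPolicy θ))) s
            = ∑ s', (M.Pmat (M.softmaxPolicy θ) ^ n) s s' * rv M θ s' by
          simp [Matrix.mulVec, dotProduct, rv]]
        rw [Finset.mul_sum]
        exact Finset.sum_congr rfl fun s' _ => by rw [h3]; ring
    _ = ∑ s', ∑' n : ℕ, (Xm ^ n) s s' * rv M θ s' := by
        refine Summable.tsum_finsetSum fun s' _ => ?_
        exact ((h2 s s').summable).mul_right _
    _ = ∑ s', CI M θ s s' * rv M θ s' := by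
        refine Finset.sum_congr rfl fun s' _ => ?_
        rw [tsum_mul_right, (h2 s s').tsum_eq]

/-! ### row-sum bound on dot products -/

lemma dot_abs_le {A : Matrix M.S M.S ℝ} {w : M.S → ℝ} {X : ℝ}
    (hX : ∀ s', |w s'| ≤ X) (s : M.S) [Nonempty M.S] :
    |∑ s', A s s' * w s'| ≤ ‖A‖ * X := by
  have hX0 : 0 ≤ X := le_trans (abs_nonneg _) (hX (Classical.arbitrary _))
  calc |∑ s', A s s' * w s'| ≤ ∑ s', |A s s'| * |w s'| := by
        refine le_trans (Finset.abs_sum_le_sum_abs _ _) (Finset.sum_le_sum fun s' _ => ?_)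
        rw [abs_mul]
    _ ≤ ∑ s', |A s s'| * X :=
        Finset.sum_le_sum fun s' _ => mul_le_mul_of_nonneg_left (hX s') (abs_nonneg _)
    _ = (∑ s', |A s s'|) * X := by rw [Finset.sum_mul]
    _ ≤ ‖A‖ * X := mul_le_mul_of_nonneg_right (rows_le_linfty_norm A s) hX0

end Mat2

end LBAux
namespace LBAux

section Obj

attribute [local instance] Matrix.linftyOpNormedAddCommGroup Matrix.linftyOpNormedRing
  Matrix.linftyOpNormedAlgebra

variable {M : FinMDP} (x v : EuclideanSpace ℝ (M.S × M.A))

lemma hasDerivAt_CI_entry (hM : M.Valid) [Nonempty M.A] (t : ℝ) (s s' : M.S) :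
    HasDerivAt (fun u : ℝ => CI M (x + u • v) s s') (C1 M (x + t • v) v s s') t := by
  have h := (entryCLM s s').hasFDerivAt.comp_hasDerivAt t (hasDerivAt_CI x v hM t)
  exact h

lemma hasDerivAt_C1_entry (hM : M.Valid) [Nonempty M.A] (t : ℝ) (s s' : M.S) :
    HasDerivAt (fun u : ℝ => C1 M (x + u • v) v s s') (C2 M (x + t • v) v s s') t := by
  have h := (entryCLM s s').hasFDerivAt.comp_hasDerivAt t (hasDerivAt_C1 x v hM t)
  exact h

variable (M) in
/-- The explicit form of the log-barrier regularized objective. -/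
noncomputable def Fobj (μ : M.S → ℝ) (lam : ℝ) (θ : EuclideanSpace ℝ (M.S × M.A)) : ℝ :=
  ∑ s, μ s * ∑ s', CI M θ s s' * rv M θ s'
    + lam / ((Fintype.card M.S : ℝ) * (Fintype.card M.A : ℝ))
      * ∑ s, ∑ a, Real.log (M.softmaxPolicy θ s a)

variable (M) in
/-- First derivative of the objective along the line `x + t v`. -/
noncomputable def psi1 (μ : M.S → ℝ) (lam : ℝ) (x v : EuclideanSpace ℝ (M.S × M.A))
    (t : ℝ) : ℝ :=
  ∑ s, μ s * ∑ s', (C1 M (x + t • v) v s s' * rv M (x + t • v) s'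
      + CI M (x + t • v) s s' * r1 M (x + t • v) v s')
    + lam / ((Fintype.card M.S : ℝ) * (Fintype.card M.A : ℝ))
      * ∑ s, ∑ a, (v (s, a) - mbar M (x + t • v) v s)

variable (M) in
/-- Second derivative of the objective along the line `x + t v`, at `t = 0`. -/
noncomputable def Dval (μ : M.S → ℝ) (lam : ℝ) (x v : EuclideanSpace ℝ (M.S × M.A)) : ℝ :=
  ∑ s, μ s * ∑ s', ((C2 M x v s s' * rv M x s' + C1 M x v s s' * r1 M x v s')
      + (C1 M x v s s' * r1 M x v s' + CI M x s s' * r2 M x v s'))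
    + lam / ((Fintype.card M.S : ℝ) * (Fintype.card M.A : ℝ))
      * ∑ s, ∑ _a : M.A, (0 - (m2 M x v s - (mbar M x v s) ^ 2))

lemma hasDerivAt_Fobj_line (hM : M.Valid) [Nonempty M.A] (μ : M.S → ℝ) (lam : ℝ) (t : ℝ) :
    HasDerivAt (fun u : ℝ => Fobj M μ lam (x + u • v)) (psi1 M μ lam x v t) t := by
  refine HasDerivAt.add ?_ ?_
  · refine HasDerivAt.fun_sum fun s _ => ?_
    have hi : HasDerivAt (fun u : ℝ => ∑ s', CI M (x + u • v) s s' * rv M (x + u • v) s')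
        (∑ s', (C1 M (x + t • v) v s s' * rv M (x + t • v) s'
          + CI M (x + t • v) s s' * r1 M (x + t • v) v s')) t :=
      HasDerivAt.fun_sum fun s' _ =>
        (hasDerivAt_CI_entry x v hM t s s').mul (hasDerivAt_rv x v t s')
    exact hi.const_mul (μ s)
  · refine HasDerivAt.const_mul _ ?_
    refine HasDerivAt.fun_sum fun s _ => HasDerivAt.fun_sum fun a _ => ?_
    exact hasDerivAt_logsm M x v t s a

lemma hasDerivAt_psi1 (hM : M.Valid) [Nonempty M.A] (μ : M.S → ℝ) (lam : ℝ) :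
    HasDerivAt (psi1 M μ lam x v) (Dval M μ lam x v) 0 := by
  have h : HasDerivAt (psi1 M μ lam x v)
      (∑ s, μ s * ∑ s', ((C2 M (x + (0:ℝ) • v) v s s' * rv M (x + (0:ℝ) • v) s'
          + C1 M (x + (0:ℝ) • v) v s s' * r1 M (x + (0:ℝ) • v) v s')
        + (C1 M (x + (0:ℝ) • v) v s s' * r1 M (x + (0:ℝ) • v) v s'
          + CI M (x + (0:ℝ) • v) s s' * r2 M (x + (0:ℝ) • v) v s'))
      + lam / ((Fintype.card M.S : ℝ) * (Fintype.card M.A : ℝ))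
        * ∑ s, ∑ _a : M.A, (0 - (m2 M (x + (0:ℝ) • v) v s - (mbar M (x + (0:ℝ) • v) v s) ^ 2))) 0 := by
    refine HasDerivAt.add ?_ ?_
    · refine HasDerivAt.fun_sum fun s _ => ?_
      have hi : HasDerivAt (fun u : ℝ => ∑ s', (C1 M (x + u • v) v s s' * rv M (x + u • v) s'
            + CI M (x + u • v) s s' * r1 M (x + u • v) v s'))
          (∑ s', ((C2 M (x + (0:ℝ) • v) v s s' * rv M (x + (0:ℝ) • v) s'
            + C1 M (x + (0:ℝ) • v) v s s' * r1 M (x + (0:ℝ) • v) v s')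
          + (C1 M (x + (0:ℝ) • v) v s s' * r1 M (x + (0:ℝ) • v) v s'
            + CI M (x + (0:ℝ) • v) s s' * r2 M (x + (0:ℝ) • v) v s'))) 0 :=
        HasDerivAt.fun_sum fun s' _ =>
          ((hasDerivAt_C1_entry x v hM 0 s s').mul (hasDerivAt_rv x v 0 s')).add
            ((hasDerivAt_CI_entry x v hM 0 s s').mul (hasDerivAt_r1 x v 0 s'))
      exact hi.const_mul (μ s)
    · refine HasDerivAt.const_mul _ ?_
      refine HasDerivAt.fun_sum fun s _ => HasDerivAt.fun_sum fun a _ => ?_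
      exact (hasDerivAt_const 0 (v (s, a))).sub (hasDerivAt_mbar M x v 0 s)
  have hx0 : x + (0:ℝ) • v = x := by simp
  rw [Dval]
  simpa [hx0] using h

/-! ### norm bounds -/

lemma P1_norm_le (hM : M.Valid) [Nonempty M.A] (θ : EuclideanSpace ℝ (M.S × M.A)) :
    ‖P1 M θ v‖ ≤ 2 * ‖v‖ :=
  comb_norm_le hM (by positivity) (qd1_abs_sum_le M θ v)

lemma P2_norm_le (hM : M.Valid) [Nonempty M.A] (θ : EuclideanSpace ℝ (M.S × M.A)) :
    ‖P2 M θ v‖ ≤ 2 * ‖v‖ ^ 2 := by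
  refine comb_norm_le hM (by positivity) fun s => le_trans (qd2_abs_sum_le M θ v s) ?_
  have := coordsq_le M v s
  linarith

lemma C1_norm_le (hM : M.Valid) [Nonempty M.A] [Nonempty M.S]
    (θ : EuclideanSpace ℝ (M.S × M.A)) :
    ‖C1 M θ v‖ ≤ 2 * M.γ * ‖v‖ * ((1 - M.γ)⁻¹) ^ 2 := by
  have h0 := hM.2.2.2.1
  have hCI := CI_norm_le hM θ
  have hP1 := P1_norm_le v hM θ
  have h1 : ‖CI M θ * P1 M θ v * CI M θ‖ ≤ ‖CI M θ‖ * ‖P1 M θ v‖ * ‖CI M θ‖ :=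
    le_trans (norm_mul_le _ _) (mul_le_mul_of_nonneg_right (norm_mul_le _ _) (norm_nonneg _))
  have hw : (0:ℝ) ≤ (1 - M.γ)⁻¹ := by
    have : (0:ℝ) < 1 - M.γ := by linarith [hM.2.2.2.2]
    positivity
  rw [C1, norm_smul, Real.norm_eq_abs, abs_of_nonneg h0]
  have hb : ‖CI M θ * P1 M θ v * CI M θ‖ ≤ (1 - M.γ)⁻¹ * (2 * ‖v‖) * (1 - M.γ)⁻¹ := by
    refine le_trans h1 ?_
    have n1 := norm_nonneg (CI M θ); have n2 := norm_nonneg (P1 M θ v); have n3 := norm_nonneg v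
    nlinarith [mul_le_mul (mul_le_mul hCI hP1 n2 hw) hCI n1 (by positivity)]
  calc M.γ * ‖CI M θ * P1 M θ v * CI M θ‖ ≤ M.γ * ((1 - M.γ)⁻¹ * (2 * ‖v‖) * (1 - M.γ)⁻¹) :=
        mul_le_mul_of_nonneg_left hb h0
    _ = 2 * M.γ * ‖v‖ * ((1 - M.γ)⁻¹) ^ 2 := by ring

lemma C2_norm_le (hM : M.Valid) [Nonempty M.A] [Nonempty M.S]
    (θ : EuclideanSpace ℝ (M.S × M.A)) :
    ‖C2 M θ v‖ ≤ 8 * M.γ ^ 2 * ‖v‖ ^ 2 * ((1 - M.γ)⁻¹) ^ 3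
      + 2 * M.γ * ‖v‖ ^ 2 * ((1 - M.γ)⁻¹) ^ 2 := by
  have h0 := hM.2.2.2.1
  have hCI := CI_norm_le hM θ
  have hP1 := P1_norm_le v hM θ
  have hP2 := P2_norm_le v hM θ
  have hC1 := C1_norm_le v hM θ
  have hw : (0:ℝ) < (1 - M.γ)⁻¹ := by
    have : (0:ℝ) < 1 - M.γ := by linarith [hM.2.2.2.2]
    positivity
  have hnv := norm_nonneg v
  have t1 : ‖C1 M θ v * P1 M θ v * CI M θ‖ ≤ ‖C1 M θ v‖ * ‖P1 M θ v‖ * ‖CI M θ‖ :=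
    le_trans (norm_mul_le _ _) (mul_le_mul_of_nonneg_right (norm_mul_le _ _) (norm_nonneg _))
  have t2 : ‖CI M θ * P2 M θ v * CI M θ‖ ≤ ‖CI M θ‖ * ‖P2 M θ v‖ * ‖CI M θ‖ :=
    le_trans (norm_mul_le _ _) (mul_le_mul_of_nonneg_right (norm_mul_le _ _) (norm_nonneg _))
  have t3 : ‖CI M θ * P1 M θ v * C1 M θ v‖ ≤ ‖CI M θ‖ * ‖P1 M θ v‖ * ‖C1 M θ v‖ :=
    le_trans (norm_mul_le _ _) (mul_le_mul_of_nonneg_right (norm_mul_le _ _) (norm_nonneg _))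
  rw [C2, norm_smul, Real.norm_eq_abs, abs_of_nonneg h0]
  have hsum : ‖C1 M θ v * P1 M θ v * CI M θ + CI M θ * P2 M θ v * CI M θ
      + CI M θ * P1 M θ v * C1 M θ v‖
      ≤ ‖C1 M θ v‖ * ‖P1 M θ v‖ * ‖CI M θ‖ + ‖CI M θ‖ * ‖P2 M θ v‖ * ‖CI M θ‖
        + ‖CI M θ‖ * ‖P1 M θ v‖ * ‖C1 M θ v‖ := by
    refine le_trans (norm_add_le _ _) ?_
    refine add_le_add (le_trans (norm_add_le _ _) (add_le_add t1 t2)) t3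
  refine le_trans (mul_le_mul_of_nonneg_left hsum h0) ?_
  have n1 := norm_nonneg (CI M θ); have n2 := norm_nonneg (P1 M θ v)
  have n3 := norm_nonneg (P2 M θ v); have n4 := norm_nonneg (C1 M θ v)
  nlinarith [mul_le_mul (mul_le_mul hC1 hP1 n2 (by positivity)) hCI n1 (by positivity),
    mul_le_mul (mul_le_mul hCI hP2 n3 hw.le) hCI n1 (by positivity),
    mul_le_mul (mul_le_mul hCI hP1 n2 hw.le) hC1 n4 (by positivity),
    sq_nonneg (‖v‖), hM.2.2.2.2]

end Obj

end LBAux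
namespace LBAux

section Bound

attribute [local instance] Matrix.linftyOpNormedAddCommGroup Matrix.linftyOpNormedRing
  Matrix.linftyOpNormedAlgebra

variable {M : FinMDP}

lemma Dval_bound (hM : M.Valid) [Nonempty M.S] [Nonempty M.A] {μ : M.S → ℝ} (hμ : IsDist μ)
    {lam : ℝ} (hlam : 0 ≤ lam) (x v : EuclideanSpace ℝ (M.S × M.A)) :
    |Dval M μ lam x v| ≤ (8 / (1 - M.γ) ^ 3 + 2 * lam / (Fintype.card M.S : ℝ)) * ‖v‖ ^ 2 := by
  have hγ0 := hM.2.2.2.1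
  have hγ1 := hM.2.2.2.2
  have hg : (0:ℝ) < 1 - M.γ := by linarith
  have hw : (0:ℝ) < (1 - M.γ)⁻¹ := by positivity
  have hnv := norm_nonneg v
  have hcS : (0:ℝ) < (Fintype.card M.S : ℝ) := by
    exact_mod_cast Fintype.card_pos
  have hcA : (0:ℝ) < (Fintype.card M.A : ℝ) := by
    exact_mod_cast Fintype.card_pos
  -- the per-state value-part bound
  have hT : ∀ s : M.S, |∑ s', ((C2 M x v s s' * rv M x s' + C1 M x v s s' * r1 M x v s')
      + (C1 M x v s s' * r1 M x v s' + CI M x s s' * r2 M x v s'))|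
      ≤ 8 / (1 - M.γ) ^ 3 * ‖v‖ ^ 2 := by
    intro s
    have e1 : (∑ s', ((C2 M x v s s' * rv M x s' + C1 M x v s s' * r1 M x v s')
        + (C1 M x v s s' * r1 M x v s' + CI M x s s' * r2 M x v s')))
        = ((∑ s', C2 M x v s s' * rv M x s') + (∑ s', C1 M x v s s' * r1 M x v s'))
          + ((∑ s', C1 M x v s s' * r1 M x v s') + (∑ s', CI M x s s' * r2 M x v s')) := by
      rw [Finset.sum_add_distrib, Finset.sum_add_distrib, Finset.sum_add_distrib]
    have d1 : |∑ s', C2 M x v s s' * rv M x s'| ≤ ‖C2 M x v‖ * 1 :=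
      dot_abs_le (fun s' => abs_rv_le hM x s') s
    have d2 : |∑ s', C1 M x v s s' * r1 M x v s'| ≤ ‖C1 M x v‖ * (2 * ‖v‖) :=
      dot_abs_le (fun s' => abs_r1_le hM x v s') s
    have d3 : |∑ s', CI M x s s' * r2 M x v s'| ≤ ‖CI M x‖ * (2 * ‖v‖ ^ 2) :=
      dot_abs_le (fun s' => abs_r2_le hM x v s') s
    have hC2 := C2_norm_le v hM x
    have hC1 := C1_norm_le v hM x
    have hCI := CI_norm_le hM x
    have k1 : |∑ s', C2 M x v s s' * rv M x s'|
        ≤ 8 * M.γ ^ 2 * ‖v‖ ^ 2 * ((1 - M.γ)⁻¹) ^ 3 + 2 * M.γ * ‖v‖ ^ 2 * ((1 - M.γ)⁻¹) ^ 2 := by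
      refine le_trans d1 ?_
      rw [mul_one]; exact hC2
    have k2 : |∑ s', C1 M x v s s' * r1 M x v s'|
        ≤ (2 * M.γ * ‖v‖ * ((1 - M.γ)⁻¹) ^ 2) * (2 * ‖v‖) :=
      le_trans d2 (mul_le_mul_of_nonneg_right hC1 (by positivity))
    have k3 : |∑ s', CI M x s s' * r2 M x v s'| ≤ (1 - M.γ)⁻¹ * (2 * ‖v‖ ^ 2) :=
      le_trans d3 (mul_le_mul_of_nonneg_right hCI (by positivity))
    have key : (8 * M.γ ^ 2 * ‖v‖ ^ 2 * ((1 - M.γ)⁻¹) ^ 3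
          + 2 * M.γ * ‖v‖ ^ 2 * ((1 - M.γ)⁻¹) ^ 2)
        + (2 * M.γ * ‖v‖ * ((1 - M.γ)⁻¹) ^ 2) * (2 * ‖v‖)
        + (2 * M.γ * ‖v‖ * ((1 - M.γ)⁻¹) ^ 2) * (2 * ‖v‖)
        + (1 - M.γ)⁻¹ * (2 * ‖v‖ ^ 2) ≤ 8 / (1 - M.γ) ^ 3 * ‖v‖ ^ 2 := by
      calc (8 * M.γ ^ 2 * ‖v‖ ^ 2 * ((1 - M.γ)⁻¹) ^ 3
            + 2 * M.γ * ‖v‖ ^ 2 * ((1 - M.γ)⁻¹) ^ 2)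
          + (2 * M.γ * ‖v‖ * ((1 - M.γ)⁻¹) ^ 2) * (2 * ‖v‖)
          + (2 * M.γ * ‖v‖ * ((1 - M.γ)⁻¹) ^ 2) * (2 * ‖v‖)
          + (1 - M.γ)⁻¹ * (2 * ‖v‖ ^ 2)
          = ‖v‖ ^ 2 * ((1 - M.γ)⁻¹) ^ 3 * (8 * M.γ ^ 2 + 10 * M.γ * (1 - M.γ)
              + 2 * (1 - M.γ) ^ 2) := by
            field_simp
            ring
        _ ≤ ‖v‖ ^ 2 * ((1 - M.γ)⁻¹) ^ 3 * 8 := by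
            refine mul_le_mul_of_nonneg_left (by nlinarith) (by positivity)
        _ = 8 / (1 - M.γ) ^ 3 * ‖v‖ ^ 2 := by
            field_simp
    rw [e1]
    calc |((∑ s', C2 M x v s s' * rv M x s') + (∑ s', C1 M x v s s' * r1 M x v s'))
          + ((∑ s', C1 M x v s s' * r1 M x v s') + (∑ s', CI M x s s' * r2 M x v s'))|
        ≤ |∑ s', C2 M x v s s' * rv M x s'| + |∑ s', C1 M x v s s' * r1 M x v s'|
          + |∑ s', C1 M x v s s' * r1 M x v s'| + |∑ s', CI M x s s' * r2 M x v s'| := by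
          refine le_trans (abs_add_le _ _) ?_
          have := abs_add_le (∑ s', C2 M x v s s' * rv M x s') (∑ s', C1 M x v s s' * r1 M x v s')
          have := abs_add_le (∑ s', C1 M x v s s' * r1 M x v s') (∑ s', CI M x s s' * r2 M x v s')
          linarith
      _ ≤ _ := le_trans (add_le_add (add_le_add (add_le_add k1 k2) k2) k3) key
  -- the value part
  have hval : |∑ s, μ s * ∑ s', ((C2 M x v s s' * rv M x s' + C1 M x v s s' * r1 M x v s')
      + (C1 M x v s s' * r1 M x v s' + CI M x s s' * r2 M x v s'))|
      ≤ 8 / (1 - M.γ) ^ 3 * ‖v‖ ^ 2 := by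
    refine le_trans (Finset.abs_sum_le_sum_abs _ _) ?_
    calc ∑ s, |μ s * ∑ s', ((C2 M x v s s' * rv M x s' + C1 M x v s s' * r1 M x v s')
          + (C1 M x v s s' * r1 M x v s' + CI M x s s' * r2 M x v s'))|
        ≤ ∑ s, μ s * (8 / (1 - M.γ) ^ 3 * ‖v‖ ^ 2) := by
          refine Finset.sum_le_sum fun s _ => ?_
          rw [abs_mul, abs_of_nonneg (hμ.1 s)]
          exact mul_le_mul_of_nonneg_left (hT s) (hμ.1 s)
      _ = 8 / (1 - M.γ) ^ 3 * ‖v‖ ^ 2 := by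
          rw [← Finset.sum_mul, hμ.2, one_mul]
  -- the barrier part
  have hbar : |lam / ((Fintype.card M.S : ℝ) * (Fintype.card M.A : ℝ))
      * ∑ s, ∑ _a : M.A, (0 - (m2 M x v s - (mbar M x v s) ^ 2))|
      ≤ 2 * lam / (Fintype.card M.S : ℝ) * ‖v‖ ^ 2 := by
    have hκ : 0 ≤ lam / ((Fintype.card M.S : ℝ) * (Fintype.card M.A : ℝ)) := by positivity
    have hin : |∑ s, ∑ _a : M.A, (0 - (m2 M x v s - (mbar M x v s) ^ 2))|
        ≤ (Fintype.card M.A : ℝ) * ‖v‖ ^ 2 := by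
      have h1 : ∀ s : M.S, (∑ _a : M.A, (0 - (m2 M x v s - (mbar M x v s) ^ 2)))
          = -((Fintype.card M.A : ℝ) * (m2 M x v s - (mbar M x v s) ^ 2)) := by
        intro s
        rw [Finset.sum_const]
        simp only [Finset.card_univ, nsmul_eq_mul, zero_sub, mul_neg]
      rw [Finset.sum_congr rfl fun s _ => h1 s, Finset.sum_neg_distrib, abs_neg]
      rw [abs_of_nonneg (Finset.sum_nonneg fun s _ =>
        mul_nonneg hcA.le (var_nonneg M x v s))]
      calc ∑ s, (Fintype.card M.A : ℝ) * (m2 M x v s - (mbar M x v s) ^ 2)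
          ≤ ∑ s, (Fintype.card M.A : ℝ) * ∑ a, v (s, a) ^ 2 := by
            refine Finset.sum_le_sum fun s _ => mul_le_mul_of_nonneg_left ?_ hcA.le
            have := m2_le M x v s
            have := sq_nonneg (mbar M x v s)
            linarith
        _ = (Fintype.card M.A : ℝ) * ‖v‖ ^ 2 := by
            rw [← Finset.mul_sum, norm_sq_eq M v, Fintype.sum_prod_type]
    rw [abs_mul, abs_of_nonneg hκ]
    calc lam / ((Fintype.card M.S : ℝ) * (Fintype.card M.A : ℝ))
          * |∑ s, ∑ _a : M.A, (0 - (m2 M x v s - (mbar M x v s) ^ 2))|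
        ≤ lam / ((Fintype.card M.S : ℝ) * (Fintype.card M.A : ℝ))
          * ((Fintype.card M.A : ℝ) * ‖v‖ ^ 2) := mul_le_mul_of_nonneg_left hin hκ
      _ = lam / (Fintype.card M.S : ℝ) * ‖v‖ ^ 2 := by
          field_simp
      _ ≤ 2 * lam / (Fintype.card M.S : ℝ) * ‖v‖ ^ 2 := by
          have h2 : lam / (Fintype.card M.S : ℝ) ≤ 2 * lam / (Fintype.card M.S : ℝ) := by
            rw [div_le_div_iff_of_pos_right hcS]
            linarith
          exact mul_le_mul_of_nonneg_right h2 (sq_nonneg _)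
  -- combine
  rw [Dval]
  refine le_trans (abs_add_le _ _) ?_
  calc _ ≤ 8 / (1 - M.γ) ^ 3 * ‖v‖ ^ 2 + 2 * lam / (Fintype.card M.S : ℝ) * ‖v‖ ^ 2 :=
        add_le_add hval hbar
    _ = (8 / (1 - M.γ) ^ 3 + 2 * lam / (Fintype.card M.S : ℝ)) * ‖v‖ ^ 2 := by ring

end Bound

end LBAux
namespace LBAux

section CD

attribute [local instance] Matrix.linftyOpNormedAddCommGroup Matrix.linftyOpNormedRing
  Matrix.linftyOpNormedAlgebra

variable {M : FinMDP} {n : ℕ∞}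

lemma contDiff_coord (p : M.S × M.A) :
    ContDiff ℝ n (fun θ : EuclideanSpace ℝ (M.S × M.A) => θ p) := by
  have h := (ContinuousLinearMap.proj (R := ℝ) (φ := fun _ : M.S × M.A => ℝ) p).contDiff
    (n := n)
  exact h.comp (PiLp.continuousLinearEquiv 2 ℝ (fun _ : M.S × M.A => ℝ)).toContinuousLinearMap.contDiff

lemma contDiff_sm [Nonempty M.A] (s : M.S) (a : M.A) :
    ContDiff ℝ n (fun θ : EuclideanSpace ℝ (M.S × M.A) => M.softmaxPolicy θ s a) := by
  have hexp : ∀ p : M.S × M.A,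
      ContDiff ℝ n (fun θ : EuclideanSpace ℝ (M.S × M.A) => Real.exp (θ p)) := fun p =>
    Real.contDiff_exp.comp (contDiff_coord p)
  refine ContDiff.div (hexp (s, a)) (ContDiff.sum fun a' _ => hexp (s, a')) ?_
  exact fun θ => ne_of_gt (Zf_pos M θ s)

lemma contDiff_Pm [Nonempty M.A] :
    ContDiff ℝ n (fun θ : EuclideanSpace ℝ (M.S × M.A) => M.Pmat (M.softmaxPolicy θ)) := by
  have h : (fun θ : EuclideanSpace ℝ (M.S × M.A) => M.Pmat (M.softmaxPolicy θ))
      = fun θ => comb M (fun s a => M.softmaxPolicy θ s a) := funext fun θ => Pmat_sm_eq M θ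
  rw [h]
  exact ContDiff.sum fun p _ => (contDiff_sm p.1 p.2).smul contDiff_const

lemma contDiff_Wm [Nonempty M.A] :
    ContDiff ℝ n (fun θ : EuclideanSpace ℝ (M.S × M.A) => Wm M θ) :=
  contDiff_const.sub (contDiff_Pm.const_smul M.γ)

lemma contDiff_CI (hM : M.Valid) [Nonempty M.A] :
    ContDiff ℝ n (fun θ : EuclideanSpace ℝ (M.S × M.A) => CI M θ) := by
  rw [contDiff_iff_contDiffAt]
  intro θ
  exact ContDiffAt.comp θ (contDiffAt_ringInverse (𝕜 := ℝ) (uW hM θ)) contDiff_Wm.contDiffAt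

lemma contDiff_Fobj (hM : M.Valid) [Nonempty M.A] (μ : M.S → ℝ) (lam : ℝ) :
    ContDiff ℝ 2 (Fobj M μ lam) := by
  refine ContDiff.add ?_ ?_
  · refine ContDiff.sum fun s _ => ContDiff.mul contDiff_const ?_
    refine ContDiff.sum fun s' _ => ContDiff.mul ?_ ?_
    · exact ((entryCLM s s').contDiff).comp (contDiff_CI hM)
    · exact ContDiff.sum fun a _ => (contDiff_sm s' a).mul contDiff_const
  · refine ContDiff.mul contDiff_const ?_
    refine ContDiff.sum fun s _ => ContDiff.sum fun a _ => ?_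
    exact (contDiff_sm s a).log fun θ => ne_of_gt (sm_pos M θ s a)

end CD

end LBAux
namespace LBAux

section End

variable {E : Type*} [NormedAddCommGroup E] [InnerProductSpace ℝ E]

lemma bilinear_opnorm_le {B : E →L[ℝ] E →L[ℝ] ℝ} {β : ℝ} (hβ : 0 ≤ β)
    (hsymm : ∀ v w : E, B v w = B w v) (hquad : ∀ v : E, |B v v| ≤ β * ‖v‖ ^ 2) :
    ‖B‖ ≤ β := by
  have key : ∀ v w : E, |B v w| ≤ β * ‖v‖ * ‖w‖ := by
    intro v w
    rcases eq_or_ne v 0 with rfl | hv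
    · simp
    rcases eq_or_ne w 0 with rfl | hw
    · simp
    set a := ‖v‖⁻¹ • v with ha_def
    set b := ‖w‖⁻¹ • w with hb_def
    have ha : ‖a‖ = 1 := norm_smul_inv_norm hv
    have hb : ‖b‖ = 1 := norm_smul_inv_norm hw
    have hab : |B a b| ≤ β := by
      have e : B (a + b) (a + b) - B (a - b) (a - b) = 4 * B a b := by
        have h1 : B (a + b) (a + b) = B a a + B a b + (B b a + B b b) := by
          simp [map_add, ContinuousLinearMap.add_apply]
          ring
        have h2 : B (a - b) (a - b) = B a a - B a b - (B b a - B b b) := by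
          simp [map_sub, ContinuousLinearMap.sub_apply]
          ring
        rw [h1, h2, hsymm b a]
        ring
      have par : ‖a + b‖ * ‖a + b‖ + ‖a - b‖ * ‖a - b‖ = 2 * (‖a‖ * ‖a‖ + ‖b‖ * ‖b‖) :=
        by simpa only [sq] using parallelogram_law_with_norm ℝ a b
      have q1 := hquad (a + b)
      have q2 := hquad (a - b)
      have habs : |4 * B a b| ≤ β * ‖a + b‖ ^ 2 + β * ‖a - b‖ ^ 2 := by
        rw [← e]
        exact le_trans (abs_sub _ _) (add_le_add q1 q2)
      have h4 : β * ‖a + b‖ ^ 2 + β * ‖a - b‖ ^ 2 = 4 * β := by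
        have : ‖a + b‖ ^ 2 + ‖a - b‖ ^ 2 = 4 := by
          have := par
          rw [ha, hb] at this
          nlinarith [this]
        nlinarith [this]
      rw [abs_mul, abs_of_nonneg (by norm_num : (0:ℝ) ≤ 4)] at habs
      rw [h4] at habs
      linarith
    have hBvw : B v w = ‖v‖ * (‖w‖ * B a b) := by
      have hv' : ‖v‖ ≠ 0 := norm_ne_zero_iff.mpr hv
      have hw' : ‖w‖ ≠ 0 := norm_ne_zero_iff.mpr hw
      rw [ha_def, hb_def]
      simp only [map_smul, ContinuousLinearMap.smul_apply, smul_eq_mul]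
      field_simp
    rw [hBvw, abs_mul, abs_mul, abs_of_nonneg (norm_nonneg v), abs_of_nonneg (norm_nonneg w)]
    calc ‖v‖ * (‖w‖ * |B a b|) ≤ ‖v‖ * (‖w‖ * β) := by
          refine mul_le_mul_of_nonneg_left (mul_le_mul_of_nonneg_left hab (norm_nonneg w))
            (norm_nonneg v)
      _ = β * ‖v‖ * ‖w‖ := by ring
  refine ContinuousLinearMap.opNorm_le_bound B hβ fun v => ?_
  refine ContinuousLinearMap.opNorm_le_bound (B v) (by positivity) fun w => ?_
  calc |B v w| ≤ β * ‖v‖ * ‖w‖ := key v w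
    _ = β * ‖v‖ * ‖w‖ := rfl

end End

section Main

variable {M : FinMDP}

lemma grad_lipschitz_Fobj (hM : M.Valid) [Nonempty M.S] [Nonempty M.A] {μ : M.S → ℝ}
    (hμ : IsDist μ) {lam : ℝ} (hlam : 0 ≤ lam) (θ θ' : EuclideanSpace ℝ (M.S × M.A)) :
    ‖gradient (Fobj M μ lam) θ - gradient (Fobj M μ lam) θ'‖ ≤
      (8 / (1 - M.γ) ^ 3 + 2 * lam / (Fintype.card M.S : ℝ)) * ‖θ - θ'‖ := by
  set β := 8 / (1 - M.γ) ^ 3 + 2 * lam / (Fintype.card M.S : ℝ) with hβ_def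
  have hg : (0:ℝ) < 1 - M.γ := by linarith [hM.2.2.2.2]
  have hcS : (0:ℝ) < (Fintype.card M.S : ℝ) := by exact_mod_cast Fintype.card_pos
  have hβ : 0 ≤ β := by positivity
  set F := Fobj M μ lam with hF_def
  have hF : ContDiff ℝ 2 F := contDiff_Fobj hM μ lam
  have hdF : Differentiable ℝ F := hF.differentiable (by norm_num)
  have hf' : ContDiff ℝ 1 (fderiv ℝ F) := hF.fderiv_right (m := 1) (by norm_num)
  have hdf' : Differentiable ℝ (fderiv ℝ F) := hf'.differentiable one_ne_zero
  have hline : ∀ (x v : EuclideanSpace ℝ (M.S × M.A)) (t : ℝ),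
      HasDerivAt (fun u : ℝ => x + u • v) v t := by
    intro x v t
    simpa using ((hasDerivAt_id t).smul_const v).const_add x
  have key1 : ∀ x v : EuclideanSpace ℝ (M.S × M.A),
      fderiv ℝ (fderiv ℝ F) x v v = Dval M μ lam x v := by
    intro x v
    have g1 : ∀ t : ℝ, HasDerivAt (fun u => F (x + u • v)) (fderiv ℝ F (x + t • v) v) t :=
      fun t => by
        have h := (hdF (x + t • v)).hasFDerivAt.comp_hasDerivAt t (hline x v t)
        exact h
    have e1 : ∀ t : ℝ, fderiv ℝ F (x + t • v) v = psi1 M μ lam x v t :=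
      fun t => (g1 t).unique (hasDerivAt_Fobj_line x v hM μ lam t)
    have h3 : HasDerivAt (fun t : ℝ => fderiv ℝ F (x + t • v)) (fderiv ℝ (fderiv ℝ F) x v) 0 := by
      have h := (hdf' (x + (0:ℝ) • v)).hasFDerivAt.comp_hasDerivAt 0 (hline x v 0)
      rw [zero_smul, add_zero] at h
      exact h
    have g2 : HasDerivAt (fun t : ℝ => fderiv ℝ F (x + t • v) v)
        (fderiv ℝ (fderiv ℝ F) x v v) 0 :=
      (ContinuousLinearMap.apply ℝ ℝ v).hasFDerivAt.comp_hasDerivAt 0 h3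
    have g2' : HasDerivAt (psi1 M μ lam x v) (fderiv ℝ (fderiv ℝ F) x v v) 0 := by
      refine g2.congr_of_eventuallyEq ?_
      filter_upwards with t using (e1 t).symm
    exact g2'.unique (hasDerivAt_psi1 x v hM μ lam)
  have key4 : ∀ x : EuclideanSpace ℝ (M.S × M.A), ‖fderiv ℝ (fderiv ℝ F) x‖ ≤ β := by
    intro x
    refine bilinear_opnorm_le hβ ?_ ?_
    · intro v w
      exact second_derivative_symmetric (fun y => (hdF y).hasFDerivAt)
        ((hdf' x).hasFDerivAt) v w
    · intro v
      rw [key1 x v]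
      exact Dval_bound hM hμ hlam x v
  have mvt := Convex.norm_image_sub_le_of_norm_fderiv_le (f := fderiv ℝ F)
    (fun y _ => hdf' y) (fun y _ => key4 y) convex_univ (Set.mem_univ θ') (Set.mem_univ θ)
  have hgrad : ∀ y : EuclideanSpace ℝ (M.S × M.A),
      gradient F y = (InnerProductSpace.toDual ℝ _).symm (fderiv ℝ F y) := fun y => rfl
  rw [hgrad, hgrad, ← LinearIsometryEquiv.map_sub]
  rw [LinearIsometryEquiv.norm_map]
  calc ‖fderiv ℝ F θ - fderiv ℝ F θ'‖ ≤ β * ‖θ - θ'‖ := mvt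
    _ = β * ‖θ - θ'‖ := rfl

end Main

end LBAux
/-- **Smoothness of the log-barrier regularized objective.** -/
theorem logbarrier_objective_smooth (M : FinMDP) (hM : M.Valid)
    (μ : M.S → ℝ) (hμ : IsDist μ) (lam : ℝ) (hlam : 0 ≤ lam)
    (L : EuclideanSpace ℝ (M.S × M.A) → ℝ)
    (hL : ∀ ϑ, L ϑ = M.Vd (M.softmaxPolicy ϑ) μ +
        lam / ((Fintype.card M.S : ℝ) * (Fintype.card M.A : ℝ)) *
          ∑ s, ∑ a, Real.log (M.softmaxPolicy ϑ s a)) :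
    ∀ θ θ' : EuclideanSpace ℝ (M.S × M.A),
      ‖gradient L θ - gradient L θ'‖ ≤
        (8 / (1 - M.γ) ^ 3 + 2 * lam / (Fintype.card M.S : ℝ)) * ‖θ - θ'‖ := by
  intro θ θ'
  by_cases hne : Nonempty M.S ∧ Nonempty M.A
  · obtain ⟨hS, hA⟩ := hne
    have hLF : L = LBAux.Fobj M μ lam := by
      funext ϑ
      rw [hL ϑ, LBAux.Fobj, FinMDP.Vd]
      congr 1
      refine Finset.sum_congr rfl fun s _ => ?_
      rw [LBAux.V_eq hM ϑ s]
    rw [hLF]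
    exact LBAux.grad_lipschitz_Fobj hM hμ hlam θ θ'
  · have hemp : θ = θ' := by
      ext p
      exact absurd ⟨⟨p.1⟩, ⟨p.2⟩⟩ hne
    rw [hemp]
    simp
end

section
/- (NPG with the softmax parameterization is soft policy iteration) Consider a finite discounted MDP, the softmax parameterization, a state distribution ρ, and θ ∈ ℝ^{S×A} with d^{π_θ}_ρ(s) > 0 for all s. Define the compatible function approximation loss L^θ(w) = E_{s∼d^{π_θ}_ρ} E_{a∼π_θ(·|s)} [ (w·∇_θ log π_θ(a|s) − A^{π_θ}(s,a))² ] for w ∈ ℝ^{S×A}. Then: (i) w minimizes L^θ over ℝ^{S×A} if and only if w_{s,a} = A^{π_θ}(s,a) + c_s for some constants c_s ∈ ℝ depending only on the state; and (ii) for every minimizer w and every η > 0, the updated parameter θ′ = θ + (η/(1−γ)) w satisfies π_{θ′}(a|s) = π_θ(a|s) · exp(η A^{π_θ}(s,a)/(1−γ)) / Z(s), where Z(s) = Σ_{a′} π_θ(a′|s) exp(η A^{π_θ}(s,a′)/(1−γ)). -/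
open scoped BigOperators InnerProductSpace

namespace FinMDP

variable (M : FinMDP) {π : M.S → M.A → ℝ}

lemma pmat_nonneg (hM : M.Valid) (hπ : M.IsPolicy π) (s s' : M.S) :
    0 ≤ M.Pmat π s s' :=
  Finset.sum_nonneg fun a _ => mul_nonneg (hπ.1 s a) (hM.1 s a s')

lemma pmat_row_sum (hM : M.Valid) (hπ : M.IsPolicy π) (s : M.S) :
    ∑ s', M.Pmat π s s' = 1 := by
  simp only [Pmat, Matrix.of_apply]
  rw [Finset.sum_comm]
  calc ∑ a, ∑ s', π s a * M.P s a s' = ∑ a, π s a := by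
        refine Finset.sum_congr rfl fun a _ => ?_
        rw [← Finset.mul_sum, hM.2.1 s a, mul_one]
    _ = 1 := hπ.2 s

lemma rPol_bounds (hM : M.Valid) (hπ : M.IsPolicy π) (s : M.S) :
    0 ≤ M.rPol π s ∧ M.rPol π s ≤ 1 := by
  constructor
  · exact Finset.sum_nonneg fun a _ => mul_nonneg (hπ.1 s a) (hM.2.2.1 s a).1
  · calc M.rPol π s ≤ ∑ a, π s a * 1 :=
        Finset.sum_le_sum fun a _ =>
          mul_le_mul_of_nonneg_left (hM.2.2.1 s a).2 (hπ.1 s a)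
    _ = 1 := by simp [hπ.2 s]

/-- The iterated reward vector is bounded in `[0,1]`. -/
lemma pow_mulVec_bounds (hM : M.Valid) (hπ : M.IsPolicy π) (t : ℕ) (s : M.S) :
    0 ≤ ((M.Pmat π ^ t).mulVec (M.rPol π)) s ∧
      ((M.Pmat π ^ t).mulVec (M.rPol π)) s ≤ 1 := by
  induction t generalizing s with
  | zero => simpa using M.rPol_bounds hM hπ s
  | succ t ih =>
      have h : ((M.Pmat π ^ (t+1)).mulVec (M.rPol π)) s
          = ∑ s', M.Pmat π s s' * ((M.Pmat π ^ t).mulVec (M.rPol π)) s' := by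
        rw [pow_succ']
        rw [← Matrix.mulVec_mulVec]
        rfl
      rw [h]
      constructor
      · exact Finset.sum_nonneg fun s' _ =>
          mul_nonneg (M.pmat_nonneg hM hπ s s') (ih s').1
      · calc ∑ s', M.Pmat π s s' * ((M.Pmat π ^ t).mulVec (M.rPol π)) s'
            ≤ ∑ s', M.Pmat π s s' * 1 :=
              Finset.sum_le_sum fun s' _ =>
                mul_le_mul_of_nonneg_left (ih s').2 (M.pmat_nonneg hM hπ s s')
          _ = 1 := by simp [M.pmat_row_sum hM hπ s]

lemma summableV (hM : M.Valid) (hπ : M.IsPolicy π) (s : M.S) :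
    Summable fun t : ℕ => M.γ ^ t * ((M.Pmat π ^ t).mulVec (M.rPol π)) s := by
  refine Summable.of_nonneg_of_le (fun t => ?_) (fun t => ?_)
      (summable_geometric_of_lt_one hM.2.2.2.1 hM.2.2.2.2)
  · exact mul_nonneg (pow_nonneg hM.2.2.2.1 t) (M.pow_mulVec_bounds hM hπ t s).1
  · calc M.γ ^ t * ((M.Pmat π ^ t).mulVec (M.rPol π)) s ≤ M.γ ^ t * 1 :=
        mul_le_mul_of_nonneg_left (M.pow_mulVec_bounds hM hπ t s).2
          (pow_nonneg hM.2.2.2.1 t)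
    _ = M.γ ^ t := mul_one _

/-- Bellman equation. -/
lemma bellman (hM : M.Valid) (hπ : M.IsPolicy π) (s : M.S) :
    M.V π s = M.rPol π s + M.γ * ∑ s', M.Pmat π s s' * M.V π s' := by
  have hsum := M.summableV hM hπ s
  rw [V, Summable.tsum_eq_zero_add hsum]
  simp only [pow_zero, one_mul, pow_one, Matrix.one_mulVec]
  congr 1
  have hstep : ∀ t : ℕ, M.γ ^ (t+1) * ((M.Pmat π ^ (t+1)).mulVec (M.rPol π)) s
      = ∑ s', M.Pmat π s s' * (M.γ * (M.γ ^ t * ((M.Pmat π ^ t).mulVec (M.rPol π)) s')) := by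
    intro t
    have h : ((M.Pmat π ^ (t+1)).mulVec (M.rPol π)) s
        = ∑ s', M.Pmat π s s' * ((M.Pmat π ^ t).mulVec (M.rPol π)) s' := by
      rw [pow_succ', ← Matrix.mulVec_mulVec]; rfl
    rw [h, Finset.mul_sum]
    refine Finset.sum_congr rfl fun s' _ => by ring
  calc (∑' t : ℕ, M.γ ^ (t+1) * ((M.Pmat π ^ (t+1)).mulVec (M.rPol π)) s)
      = ∑' t : ℕ, ∑ s', M.Pmat π s s' * (M.γ * (M.γ ^ t * ((M.Pmat π ^ t).mulVec (M.rPol π)) s')) := by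
        exact tsum_congr hstep
    _ = ∑ s', ∑' t : ℕ, M.Pmat π s s' * (M.γ * (M.γ ^ t * ((M.Pmat π ^ t).mulVec (M.rPol π)) s')) := by
        refine Summable.tsum_finsetSum fun s' _ => ?_
        exact ((M.summableV hM hπ s').mul_left _).mul_left _
    _ = M.γ * ∑ s', M.Pmat π s s' * M.V π s' := by
        rw [Finset.mul_sum]
        refine Finset.sum_congr rfl fun s' _ => ?_
        rw [tsum_mul_left, tsum_mul_left]
        unfold V
        ring

lemma sum_pi_Q (hM : M.Valid) (hπ : M.IsPolicy π) (s : M.S) :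
    ∑ a, π s a * M.Qf π s a = M.V π s := by
  rw [M.bellman hM hπ s]
  simp only [Qf]
  rw [Finset.sum_congr rfl (fun a _ => mul_add (π s a) (M.r s a) _)]
  rw [Finset.sum_add_distrib]
  congr 1
  simp only [Pmat, Matrix.of_apply, Finset.sum_mul, Finset.mul_sum]
  rw [Finset.sum_comm]
  exact Finset.sum_congr rfl fun a _ => Finset.sum_congr rfl fun s' _ => by ring

lemma sum_pi_adv (hM : M.Valid) (hπ : M.IsPolicy π) (s : M.S) :
    ∑ a, π s a * M.Adv π s a = 0 := by
  simp only [Adv, mul_sub]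
  rw [Finset.sum_sub_distrib, M.sum_pi_Q hM hπ s, ← Finset.sum_mul, hπ.2 s, one_mul, sub_self]

lemma softmax_pos (θ : EuclideanSpace ℝ (M.S × M.A)) (s : M.S) (a : M.A) :
    0 < M.softmaxPolicy θ s a := by
  have : Nonempty M.A := ⟨a⟩
  exact div_pos (Real.exp_pos _)
    (Finset.sum_pos (fun a' _ => Real.exp_pos _) Finset.univ_nonempty)

lemma softmax_isPolicy [Nonempty M.A] (θ : EuclideanSpace ℝ (M.S × M.A)) :
    M.IsPolicy (M.softmaxPolicy θ) := by
  constructor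
  · exact fun s a => (M.softmax_pos θ s a).le
  · intro s
    have hZ : (0:ℝ) < ∑ a', Real.exp (θ (s, a')) :=
      Finset.sum_pos (fun a' _ => Real.exp_pos _) Finset.univ_nonempty
    simp only [softmaxPolicy]
    rw [← Finset.sum_div, div_self hZ.ne']

end FinMDP


/-- **NPG with the softmax parameterization is soft policy iteration.** -/
theorem npg_softmax_soft_policy_iteration (M : FinMDP) (hM : M.Valid)
    (ρ : M.S → ℝ) (hρ : IsDist ρ)
    (θ : EuclideanSpace ℝ (M.S × M.A))
    (hpos : ∀ s, 0 < M.dvisitD (M.softmaxPolicy θ) ρ s)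
    -- the compatible function approximation loss `L^θ(w)`
    (L : EuclideanSpace ℝ (M.S × M.A) → ℝ)
    (hL : ∀ w : EuclideanSpace ℝ (M.S × M.A),
        L w = ∑ s, M.dvisitD (M.softmaxPolicy θ) ρ s *
          ∑ a, M.softmaxPolicy θ s a *
            ((w (s, a) - ∑ a', M.softmaxPolicy θ s a' * w (s, a')) -
              M.Adv (M.softmaxPolicy θ) s a) ^ 2) :
    (∀ w : EuclideanSpace ℝ (M.S × M.A),
        (∀ w' : EuclideanSpace ℝ (M.S × M.A), L w ≤ L w') ↔
          ∃ c : M.S → ℝ, ∀ s a, w (s, a) = M.Adv (M.softmaxPolicy θ) s a + c s) ∧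
      ∀ w : EuclideanSpace ℝ (M.S × M.A),
        (∀ w' : EuclideanSpace ℝ (M.S × M.A), L w ≤ L w') →
        ∀ η : ℝ, 0 < η → ∀ s a,
          M.softmaxPolicy (θ + (η / (1 - M.γ)) • w) s a =
            M.softmaxPolicy θ s a *
                Real.exp (η * M.Adv (M.softmaxPolicy θ) s a / (1 - M.γ)) /
              ∑ a', M.softmaxPolicy θ s a' *
                Real.exp (η * M.Adv (M.softmaxPolicy θ) s a' / (1 - M.γ)) := by
  rcases isEmpty_or_nonempty M.A with hA | hA
  · -- degenerate case: no actions
    have hL0 : ∀ w, L w = 0 := by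
      intro w; rw [hL w]; simp
    constructor
    · intro w
      constructor
      · intro _
        exact ⟨fun _ => 0, fun s a => (IsEmpty.false a).elim⟩
      · intro _ w'
        rw [hL0 w, hL0 w']
    · intro w _ η _ s a
      exact (IsEmpty.false a).elim
  · -- main case
    have hp : M.IsPolicy (M.softmaxPolicy θ) := M.softmax_isPolicy θ
    have hπpos : ∀ s a, 0 < M.softmaxPolicy θ s a := M.softmax_pos θ
    have hadv : ∀ s, ∑ a, M.softmaxPolicy θ s a * M.Adv (M.softmaxPolicy θ) s a = 0 :=
      M.sum_pi_adv hM hp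
    have hnonneg : ∀ w, 0 ≤ L w := by
      intro w
      rw [hL w]
      refine Finset.sum_nonneg fun s _ => mul_nonneg (hpos s).le ?_
      exact Finset.sum_nonneg fun a _ => mul_nonneg (hπpos s a).le (sq_nonneg _)
    -- the advantage function as a parameter vector
    have hLA : L (WithLp.toLp 2 (fun p : M.S × M.A => M.Adv (M.softmaxPolicy θ) p.1 p.2) :
        EuclideanSpace ℝ (M.S × M.A)) = 0 := by
      rw [hL]
      simp only [PiLp.toLp_apply]
      refine Finset.sum_eq_zero fun s _ => ?_
      have : (∑ a, M.softmaxPolicy θ s a *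
          ((M.Adv (M.softmaxPolicy θ) s a -
            ∑ a', M.softmaxPolicy θ s a' * M.Adv (M.softmaxPolicy θ) s a') -
              M.Adv (M.softmaxPolicy θ) s a) ^ 2) = 0 := by
        rw [Finset.sum_eq_zero]
        intro a _
        rw [hadv s]
        ring
      rw [this, mul_zero]
    have hmin : ∀ w : EuclideanSpace ℝ (M.S × M.A),
        (∀ w' : EuclideanSpace ℝ (M.S × M.A), L w ≤ L w') →
        ∀ s a, w (s, a) = M.Adv (M.softmaxPolicy θ) s a +
          ∑ a', M.softmaxPolicy θ s a' * w (s, a') := by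
      intro w hw s a
      have h0 : L w = 0 := le_antisymm (le_of_le_of_eq (hw _) hLA) (hnonneg w)
      rw [hL w] at h0
      have hterm := (Finset.sum_eq_zero_iff_of_nonneg (fun s _ =>
        mul_nonneg (hpos s).le (Finset.sum_nonneg fun a _ =>
          mul_nonneg (hπpos s a).le (sq_nonneg _)))).1 h0 s (Finset.mem_univ s)
      have hinner := (mul_eq_zero.1 hterm).resolve_left (hpos s).ne'
      have ha := (Finset.sum_eq_zero_iff_of_nonneg (fun a _ =>
        mul_nonneg (hπpos s a).le (sq_nonneg _))).1 hinner a (Finset.mem_univ a)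
      have hsq := (mul_eq_zero.1 ha).resolve_left (hπpos s a).ne'
      have hbase : (w (s, a) - ∑ a', M.softmaxPolicy θ s a' * w (s, a')) -
          M.Adv (M.softmaxPolicy θ) s a = 0 := by
        exact (pow_eq_zero_iff two_ne_zero).1 hsq
      have := sub_eq_zero.1 hbase
      linarith [this]
    constructor
    · intro w
      constructor
      · intro hw
        exact ⟨fun s => ∑ a', M.softmaxPolicy θ s a' * w (s, a'), hmin w hw⟩
      · rintro ⟨c, hc⟩ w'
        have hLw : L w = 0 := by
          rw [hL]
          refine Finset.sum_eq_zero fun s _ => ?_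
          have hcsum : (∑ a', M.softmaxPolicy θ s a' * w (s, a')) = c s := by
            simp only [hc]
            rw [Finset.sum_congr rfl (fun a' _ => mul_add (M.softmaxPolicy θ s a') _ _),
              Finset.sum_add_distrib, hadv s, ← Finset.sum_mul, hp.2 s]
            ring
          have : (∑ a, M.softmaxPolicy θ s a *
              ((w (s, a) - ∑ a', M.softmaxPolicy θ s a' * w (s, a')) -
                M.Adv (M.softmaxPolicy θ) s a) ^ 2) = 0 := by
            refine Finset.sum_eq_zero fun a _ => ?_
            rw [hcsum, hc s a]
            ring
          rw [this, mul_zero]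
        rw [hLw]
        exact hnonneg w'
    · intro w hw η hη s a
      have hc := hmin w hw
      set c : M.S → ℝ := fun s => ∑ a', M.softmaxPolicy θ s a' * w (s, a') with hcdef
      have hγ : (0:ℝ) < 1 - M.γ := by linarith [hM.2.2.2.2]
      set β : ℝ := η / (1 - M.γ) with hβ
      have hβA : ∀ a', η * M.Adv (M.softmaxPolicy θ) s a' / (1 - M.γ) =
          β * M.Adv (M.softmaxPolicy θ) s a' := by
        intro a'; rw [hβ]; ring
      have hunfold : ∀ (ψ : EuclideanSpace ℝ (M.S × M.A)) (s : M.S) (a : M.A),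
          M.softmaxPolicy ψ s a = Real.exp (ψ (s, a)) / ∑ a', Real.exp (ψ (s, a')) :=
        fun _ _ _ => rfl
      have happ : ∀ (a' : M.A), (θ + β • w) (s, a') = θ (s, a') + β * w (s, a') := by
        intro a'; simp [PiLp.add_apply, PiLp.smul_apply, smul_eq_mul]
      have hexp : ∀ a' : M.A, Real.exp (θ (s, a') + β * w (s, a')) =
          Real.exp (θ (s, a')) * Real.exp (β * M.Adv (M.softmaxPolicy θ) s a') *
            Real.exp (β * c s) := by
        intro a'
        rw [hc s a', ← Real.exp_add, ← Real.exp_add]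
        congr 1
        ring
      have hZ : (0:ℝ) < ∑ a', Real.exp (θ (s, a')) :=
        Finset.sum_pos (fun a' _ => Real.exp_pos _) Finset.univ_nonempty
      have hD : (0:ℝ) < ∑ a', Real.exp (θ (s, a')) *
          Real.exp (β * M.Adv (M.softmaxPolicy θ) s a') :=
        Finset.sum_pos (fun a' _ => mul_pos (Real.exp_pos _) (Real.exp_pos _))
          Finset.univ_nonempty
      simp only [hunfold, happ, hexp, hβA]
      rw [← Finset.sum_mul, mul_div_mul_right _ _ (Real.exp_ne_zero (β * c s))]
      have hsplit : ∀ a' : M.A, Real.exp (θ (s, a')) / (∑ a'', Real.exp (θ (s, a''))) *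
          Real.exp (β * M.Adv (M.softmaxPolicy θ) s a') =
          Real.exp (θ (s, a')) * Real.exp (β * M.Adv (M.softmaxPolicy θ) s a') /
            (∑ a'', Real.exp (θ (s, a''))) := by
        intro a'; ring
      simp only [hsplit]
      rw [← Finset.sum_div]
      rw [div_div_div_cancel_right₀]
      exact hZ.ne'
end
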